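/- arXiv:2104.04894 — 8 statements merged into one kernel-verified Lean document; each statement's English description precedes it below -/
import Mathlib

section
/- Let C = { (z,M) ∈ ℝ^d × Sym(d,ℝ) : (1/2)·(z ⊗ z) + M ≤ Id }. Its support function χ_C*(θ, S) := sup { ⟨θ,z⟩ + ⟨S,M⟩ : (z,M) ∈ C } equals Tr S + (1/2)⟨S q, q⟩ if S is positive semi-definite and θ = S q for some q ∈ ℝ^d, and equals +∞ if S is not positive semi-definite or θ is not in the image of S. Moreover the value Tr S + (1/2)⟨S q, q⟩ does not depend on the choice of q with Sq = θ. -/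
open Matrix RealInnerProductSpace

lemma trace_mul_vecMulVec {d : ℕ} (S : Matrix (Fin d) (Fin d) ℝ) (z : Fin d → ℝ) :
    (S * vecMulVec z z).trace = S.mulVec z ⬝ᵥ z := by
  simp only [Matrix.trace, Matrix.diag, Matrix.mul_apply, vecMulVec_apply, Matrix.mulVec,
    dotProduct, Finset.sum_mul]
  exact Finset.sum_congr rfl fun i _ => Finset.sum_congr rfl fun j _ => by ring

open scoped MatrixOrder in
lemma trace_mul_nonneg' {d : ℕ} {A B : Matrix (Fin d) (Fin d) ℝ}
    (hA : A.PosSemidef) (hB : B.PosSemidef) : 0 ≤ (A * B).trace := by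
  obtain ⟨C, rfl⟩ := (by obtain ⟨C, hC⟩ := CStarAlgebra.nonneg_iff_eq_star_mul_self.mp hA.nonneg; exact ⟨C, hC⟩ : ∃ C : Matrix (Fin d) (Fin d) ℝ, A = Cᴴ * C)
  obtain ⟨D, rfl⟩ := (by obtain ⟨D, hD⟩ := CStarAlgebra.nonneg_iff_eq_star_mul_self.mp hB.nonneg; exact ⟨D, hD⟩ : ∃ D : Matrix (Fin d) (Fin d) ℝ, B = Dᴴ * D)
  have h : Cᴴ * C * (Dᴴ * D) = Cᴴ * (C * Dᴴ * D) := by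
    simp only [Matrix.mul_assoc]
  rw [h, Matrix.trace_mul_comm]
  have h2 : C * Dᴴ * D * Cᴴ = (D * Cᴴ)ᴴ * (D * Cᴴ) := by
    simp only [conjTranspose_mul, conjTranspose_conjTranspose, Matrix.mul_assoc]
  rw [h2]
  simp only [Matrix.trace, Matrix.diag, Matrix.mul_apply, conjTranspose_apply, star_trivial]
  exact Finset.sum_nonneg fun i _ => Finset.sum_nonneg fun j _ => mul_self_nonneg _

lemma dot_symm' {d : ℕ} {S : Matrix (Fin d) (Fin d) ℝ} (hS : S.IsSymm) (a b : Fin d → ℝ) :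
    S.mulVec a ⬝ᵥ b = S.mulVec b ⬝ᵥ a := by
  rw [dotProduct_comm, dotProduct_mulVec, ← mulVec_transpose, hS.eq]

lemma posSemidef_vecMulVec' {d : ℕ} (v : Fin d → ℝ) : (vecMulVec v v).PosSemidef := by
  refine Matrix.PosSemidef.of_dotProduct_mulVec_nonneg ?_ ?_
  · ext i j
    simp [vecMulVec_apply, conjTranspose_apply, mul_comm]
  · intro x
    have h : vecMulVec v v *ᵥ x = (v ⬝ᵥ x) • v := by
      ext i
      simp only [vecMulVec_apply, Matrix.mulVec, dotProduct, Pi.smul_apply, smul_eq_mul,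
        Finset.mul_sum]
      rw [Finset.sum_mul]
      exact Finset.sum_congr rfl fun j _ => by ring
    rw [h]
    simp only [dotProduct_smul, star_trivial, smul_eq_mul]
    rw [dotProduct_comm]
    exact mul_self_nonneg _

lemma isSymm_vecMulVec {d : ℕ} (v : Fin d → ℝ) : (vecMulVec v v).IsSymm := by
  ext i j; simp [Matrix.IsSymm, vecMulVec_apply, transpose_apply, mul_comm]

lemma psd_add' {d : ℕ} {A B : Matrix (Fin d) (Fin d) ℝ}
    (hA : A.PosSemidef) (hB : B.PosSemidef) : (A + B).PosSemidef := by
  refine .of_dotProduct_mulVec_nonneg (hA.1.add hB.1) fun x => ?_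
  rw [Matrix.add_mulVec, dotProduct_add]
  exact add_nonneg (hA.dotProduct_mulVec_nonneg x) (hB.dotProduct_mulVec_nonneg x)

lemma psd_smul' {d : ℕ} {A : Matrix (Fin d) (Fin d) ℝ} (hA : A.PosSemidef)
    {c : ℝ} (hc : 0 ≤ c) : (c • A).PosSemidef := by
  refine .of_dotProduct_mulVec_nonneg ?_ fun x => ?_
  · rw [Matrix.IsHermitian, conjTranspose_smul, star_trivial, hA.1.eq]
  · rw [smul_mulVec, dotProduct_smul, smul_eq_mul]
    exact mul_nonneg hc (hA.dotProduct_mulVec_nonneg x)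

lemma vecMulVec_smul_smul {d : ℕ} (t : ℝ) (v : Fin d → ℝ) :
    vecMulVec (t • v) (t • v) = (t ^ 2) • vecMulVec v v := by
  ext i j
  simp only [vecMulVec_apply, Pi.smul_apply, Matrix.smul_apply, smul_eq_mul]
  ring

lemma exists_ker_vec {d : ℕ} {S : Matrix (Fin d) (Fin d) ℝ} (hS : S.IsSymm)
    {θ : Fin d → ℝ} (h : ∀ q, S.mulVec q ≠ θ) :
    ∃ v, S.mulVec v = 0 ∧ θ ⬝ᵥ v ≠ 0 := by
  by_contra hc
  push_neg at hc
  set T := Matrix.toEuclideanLin S with hT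
  have hherm : S.IsHermitian := by
    rwa [Matrix.IsHermitian, conjTranspose_eq_transpose_of_trivial]
  have hsymm : T.IsSymmetric := Matrix.isHermitian_iff_isSymmetric.mp hherm
  have hker : (LinearMap.range T)ᗮ = LinearMap.ker T := by
    ext x
    simp only [Submodule.mem_orthogonal, LinearMap.mem_range, LinearMap.mem_ker,
      forall_exists_index]
    constructor
    · intro hx
      have h1 : (inner ℝ (T x) (T x) : ℝ) = 0 := by
        rw [hsymm x (T x), real_inner_comm]
        exact hx (T (T x)) (T x) rfl
      exact inner_self_eq_zero.mp h1
    · intro hx u y hy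
      subst hy
      rw [hsymm y x, hx, inner_zero_right]
  have hrange : LinearMap.range T = (LinearMap.ker T)ᗮ := by
    rw [← hker, Submodule.orthogonal_orthogonal]
  set θ' : EuclideanSpace ℝ (Fin d) := (WithLp.equiv 2 (Fin d → ℝ)).symm θ with hθ'
  have hmem : θ' ∈ (LinearMap.ker T)ᗮ := by
    intro v hv
    have hv0 : S.mulVec (WithLp.equiv 2 (Fin d → ℝ) v) = 0 := by
      have := congrArg (WithLp.equiv 2 (Fin d → ℝ)) (LinearMap.mem_ker.mp hv)
      simpa [Matrix.toEuclideanLin_apply, hT] using this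
    have hd : θ ⬝ᵥ (WithLp.equiv 2 (Fin d → ℝ) v) = 0 := hc _ hv0
    calc (inner ℝ v θ' : ℝ) = (WithLp.equiv 2 (Fin d → ℝ) v) ⬝ᵥ θ := by
          simp only [PiLp.inner_apply, RCLike.inner_apply, conj_trivial, dotProduct]
          exact Finset.sum_congr rfl fun i _ => mul_comm _ _
      _ = 0 := by rw [dotProduct_comm]; exact hd
  rw [← hrange] at hmem
  obtain ⟨q, hq⟩ := hmem
  exact h (WithLp.equiv 2 (Fin d → ℝ) q) (by
    have := congrArg (WithLp.equiv 2 (Fin d → ℝ)) hq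
    simpa [Matrix.toEuclideanLin_apply, hT, hθ'] using this)

theorem stmt3 {d : ℕ} (θ : Fin d → ℝ) (S : Matrix (Fin d) (Fin d) ℝ) (hS : S.IsSymm) :
    (∀ q : Fin d → ℝ, S.PosSemidef → S.mulVec q = θ →
      IsGreatest
        ((fun p : (Fin d → ℝ) × Matrix (Fin d) (Fin d) ℝ => θ ⬝ᵥ p.1 + (S * p.2).trace) ''
          {p | p.2.IsSymm ∧ ((1 : Matrix (Fin d) (Fin d) ℝ) -
            ((1/2 : ℝ) • Matrix.vecMulVec p.1 p.1 + p.2)).PosSemidef})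
        (S.trace + (1/2) * (S.mulVec q ⬝ᵥ q))) ∧
    ((¬ S.PosSemidef ∨ ∀ q : Fin d → ℝ, S.mulVec q ≠ θ) →
      ¬ BddAbove
        ((fun p : (Fin d → ℝ) × Matrix (Fin d) (Fin d) ℝ => θ ⬝ᵥ p.1 + (S * p.2).trace) ''
          {p | p.2.IsSymm ∧ ((1 : Matrix (Fin d) (Fin d) ℝ) -
            ((1/2 : ℝ) • Matrix.vecMulVec p.1 p.1 + p.2)).PosSemidef})) ∧
    (∀ q₁ q₂ : Fin d → ℝ, S.mulVec q₁ = θ → S.mulVec q₂ = θ →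
      S.trace + (1/2) * (S.mulVec q₁ ⬝ᵥ q₁) = S.trace + (1/2) * (S.mulVec q₂ ⬝ᵥ q₂)) := by
  refine ⟨?_, ?_, ?_⟩
  · -- part 1
    intro q hpsd hq
    constructor
    · -- membership
      refine ⟨(q, 1 - (1/2 : ℝ) • vecMulVec q q), ⟨?_, ?_⟩, ?_⟩
      · rw [Matrix.IsSymm, transpose_sub, transpose_smul, transpose_one, (isSymm_vecMulVec q).eq]
      · have h0 : (1 : Matrix (Fin d) (Fin d) ℝ) -
            ((1/2 : ℝ) • vecMulVec q q + (1 - (1/2 : ℝ) • vecMulVec q q)) = 0 := by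
          abel
        rw [h0]
        exact Matrix.PosSemidef.zero
      · simp only [Matrix.mul_sub, Matrix.mul_one, Matrix.mul_smul, trace_sub, trace_smul,
          trace_mul_vecMulVec, smul_eq_mul, ← hq]
        ring
    · rintro x ⟨⟨z, M⟩, ⟨hMsym, hN⟩, rfl⟩
      simp only at hN ⊢
      have htr : 0 ≤ (S * ((1 : Matrix (Fin d) (Fin d) ℝ) -
          ((1/2 : ℝ) • vecMulVec z z + M))).trace := trace_mul_nonneg' hpsd hN
      have hexp : (S * ((1 : Matrix (Fin d) (Fin d) ℝ) -
          ((1/2 : ℝ) • vecMulVec z z + M))).trace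
          = S.trace - (1/2) * (S.mulVec z ⬝ᵥ z) - (S * M).trace := by
        simp only [Matrix.mul_sub, Matrix.mul_add, Matrix.mul_smul, Matrix.mul_one,
          trace_sub, trace_add, trace_smul, trace_mul_vecMulVec, smul_eq_mul]
        ring
      have hquad : 0 ≤ S.mulVec (q - z) ⬝ᵥ (q - z) := by
        rw [dotProduct_comm]
        simpa using hpsd.dotProduct_mulVec_nonneg (q - z)
      have hexpand : S.mulVec (q - z) ⬝ᵥ (q - z)
          = S.mulVec q ⬝ᵥ q - 2 * (S.mulVec q ⬝ᵥ z) + S.mulVec z ⬝ᵥ z := by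
        rw [Matrix.mulVec_sub]
        simp only [sub_dotProduct, dotProduct_sub]
        rw [dot_symm' hS z q]
        ring
      have hθz : θ ⬝ᵥ z = S.mulVec q ⬝ᵥ z := by rw [hq]
      rw [hθz]
      linarith
  · -- part 2
    intro hcase
    rintro ⟨b, hb⟩
    rcases hcase with hnpsd | hnr
    · have hherm : S.IsHermitian := by
        rwa [Matrix.IsHermitian, conjTranspose_eq_transpose_of_trivial]
      have hx : ¬ ∀ x, 0 ≤ star x ⬝ᵥ S *ᵥ x := fun hx => hnpsd (.of_dotProduct_mulVec_nonneg hherm hx)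
      push_neg at hx
      obtain ⟨v, hv⟩ := hx
      have hc : S.mulVec v ⬝ᵥ v < 0 := by
        rw [dotProduct_comm]
        simpa using hv
      set c : ℝ := S.mulVec v ⬝ᵥ v with hcdef
      set t : ℝ := max 0 ((b + 1) / (-c)) with htdef
      have ht0 : 0 ≤ t := le_max_left _ _
      have hmem : ((0 : Fin d → ℝ), (-t) • vecMulVec v v) ∈
          {p : (Fin d → ℝ) × Matrix (Fin d) (Fin d) ℝ | p.2.IsSymm ∧
            ((1 : Matrix (Fin d) (Fin d) ℝ) -
              ((1/2 : ℝ) • Matrix.vecMulVec p.1 p.1 + p.2)).PosSemidef} := by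
        constructor
        · rw [Matrix.IsSymm, transpose_smul, (isSymm_vecMulVec v).eq]
        · have h0 : (1 : Matrix (Fin d) (Fin d) ℝ) -
              ((1/2 : ℝ) • vecMulVec (0 : Fin d → ℝ) (0 : Fin d → ℝ) + (-t) • vecMulVec v v)
              = 1 + t • vecMulVec v v := by
            have hz : vecMulVec (0 : Fin d → ℝ) (0 : Fin d → ℝ) = 0 := by
              ext i j; simp [vecMulVec_apply]
            rw [hz, smul_zero, neg_smul]
            abel
          rw [h0]
          exact psd_add' Matrix.PosSemidef.one (psd_smul' (posSemidef_vecMulVec' v) ht0)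
      have hval := hb (Set.mem_image_of_mem _ hmem)
      simp only [dotProduct_zero, Matrix.mul_smul, trace_smul, trace_mul_vecMulVec,
        smul_eq_mul, zero_add, ← hcdef] at hval
      have ht : (b + 1) / (-c) ≤ t := le_max_right _ _
      have hcpos : 0 < -c := by linarith
      have : b + 1 ≤ t * (-c) := (div_le_iff₀ hcpos).mp ht
      nlinarith
    · obtain ⟨v, hv0, hva⟩ := exists_ker_vec hS hnr
      set a : ℝ := θ ⬝ᵥ v with hadef
      set w : Fin d → ℝ := a • v with hwdef
      have hw0 : S.mulVec w = 0 := by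
        rw [hwdef, Matrix.mulVec_smul, hv0, smul_zero]
      have hθw : θ ⬝ᵥ w = a ^ 2 := by
        rw [hwdef, dotProduct_smul, smul_eq_mul, ← hadef]
        ring
      have hc2 : 0 < a ^ 2 := by positivity
      set t : ℝ := max 0 ((b + 1) / a ^ 2) with htdef
      have ht0 : 0 ≤ t := le_max_left _ _
      have hmem : ((t • w : Fin d → ℝ), (-(t ^ 2 / 2)) • vecMulVec w w) ∈
          {p : (Fin d → ℝ) × Matrix (Fin d) (Fin d) ℝ | p.2.IsSymm ∧
            ((1 : Matrix (Fin d) (Fin d) ℝ) -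
              ((1/2 : ℝ) • Matrix.vecMulVec p.1 p.1 + p.2)).PosSemidef} := by
        constructor
        · rw [Matrix.IsSymm, transpose_smul, (isSymm_vecMulVec w).eq]
        · have h0 : (1 : Matrix (Fin d) (Fin d) ℝ) -
              ((1/2 : ℝ) • vecMulVec (t • w) (t • w) + (-(t ^ 2 / 2)) • vecMulVec w w)
              = 1 := by
            rw [vecMulVec_smul_smul, smul_smul, ← add_smul]
            have hz : (1/2 : ℝ) * t ^ 2 + -(t ^ 2 / 2) = 0 := by ring
            rw [hz, zero_smul, sub_zero]
          rw [h0]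
          exact Matrix.PosSemidef.one
      have hval := hb (Set.mem_image_of_mem _ hmem)
      simp only [dotProduct_smul, smul_eq_mul, Matrix.mul_smul, trace_smul,
        trace_mul_vecMulVec, hw0, zero_dotProduct, mul_zero, add_zero, hθw] at hval
      have ht : (b + 1) / a ^ 2 ≤ t := le_max_right _ _
      have : b + 1 ≤ t * a ^ 2 := (div_le_iff₀ hc2).mp ht
      nlinarith
  · -- part 3
    intro q₁ q₂ h1 h2
    have key : S.mulVec q₁ ⬝ᵥ q₁ = S.mulVec q₂ ⬝ᵥ q₂ := by
      rw [h1, ← h2, dot_symm' hS q₂ q₁, h1, ← h2]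
    rw [key]
end

section
/- Let Ω ⊂ ℝ^d be a bounded convex domain and let u : closure(Ω) → ℝ and w : closure(Ω) → ℝ^d be Lipschitz. Then the pointwise constraint (1/2)·(∇u ⊗ ∇u) + e(w) ≤ Id holding almost everywhere in Ω is equivalent to the two-point condition (1/2)|u(y) − u(x)|² + ⟨w(y) − w(x), y − x⟩ ≤ |x − y|² for all x, y in closure(Ω). -/
open MeasureTheory Set Filter Metric Topology

lemma aux_nonincr {φ : ℝ → ℝ} {L : ℝ} (hL : 0 ≤ L)
    (hφL : ∀ s ∈ Icc (0:ℝ) 1, ∀ t ∈ Icc (0:ℝ) 1, |φ s - φ t| ≤ L * |s - t|)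
    {N : Set ℝ} (hN : volume N = 0)
    (hd : ∀ t ∈ Ico (0:ℝ) 1, t ∉ N → ∃ φ', HasDerivAt φ φ' t ∧ φ' ≤ 0) :
    φ 1 ≤ φ 0 := by
  have hφc : ContinuousOn φ (Icc 0 1) := by
    refine (LipschitzOnWith.of_dist_le_mul (K := L.toNNReal) ?_).continuousOn
    intro a ha b hb
    rw [Real.dist_eq, Real.dist_eq, Real.coe_toNNReal L hL]
    exact hφL a ha b hb
  have key : ∀ ε : ℝ, 0 < ε → φ 1 ≤ φ 0 + ε + (2 * L + ε) * ε := by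
    intro ε hε
    obtain ⟨U, hNU, hUo, hU⟩ := Set.exists_isOpen_lt_of_lt N (ENNReal.ofReal ε)
      (by rw [hN]; exact ENNReal.ofReal_pos.2 hε)
    have hUfin : ∀ x : ℝ, volume (U ∩ Ioc 0 x) ≠ ⊤ :=
      fun x => ((measure_mono inter_subset_left).trans_lt (hU.trans_le le_top)).ne
    set v : ℝ → ℝ := fun x => (volume (U ∩ Ioc 0 x)).toReal with hv
    have hv0 : v 0 = 0 := by simp [hv]
    have hvmono : Monotone v := fun a b hab =>
      ENNReal.toReal_mono (hUfin b)
        (measure_mono (inter_subset_inter_right _ (Ioc_subset_Ioc_right hab)))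
    have hvlip : ∀ a b : ℝ, a ≤ b → v b - v a ≤ b - a := by
      intro a b hab
      have h1 : volume (U ∩ Ioc 0 b) ≤ volume (U ∩ Ioc 0 a) + volume (Ioc a b) := by
        refine (measure_mono ?_).trans (measure_union_le _ _)
        rintro t ⟨htU, ht0, htb⟩
        rcases le_or_gt t a with h | h
        · exact Or.inl ⟨htU, ht0, h⟩
        · exact Or.inr ⟨h, htb⟩
      have h2 := ENNReal.toReal_mono (by
          refine ENNReal.add_ne_top.2 ⟨hUfin a, ?_⟩
          simp [Real.volume_Ioc]) h1
      rw [ENNReal.toReal_add (hUfin a) (by simp [Real.volume_Ioc]),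
        Real.volume_Ioc, ENNReal.toReal_ofReal (by linarith)] at h2
      simp only [hv] at *
      linarith
    have hvcont : Continuous v := by
      refine (LipschitzWith.of_dist_le_mul (K := 1) fun a b => ?_).continuous
      rw [Real.dist_eq, Real.dist_eq, NNReal.coe_one, one_mul]
      rcases le_total a b with h | h
      · have h1 := hvlip a b h
        have h2 := hvmono h
        rw [abs_sub_comm (v a), abs_of_nonneg (by linarith), abs_sub_comm a,
          abs_of_nonneg (by linarith)]
        linarith
      · have h1 := hvlip b a h
        have h2 := hvmono h
        rw [abs_of_nonneg (by linarith), abs_of_nonneg (by linarith)]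
        linarith
    set f : ℝ → ℝ := fun t => φ t - (2 * L + ε) * v t with hf
    set B : ℝ → ℝ := fun t => φ 0 + ε * t with hB
    have hfB : f 1 ≤ B 1 := by
      refine image_le_of_liminf_slope_right_le_deriv_boundary (B' := fun _ => ε)
        (hφc.sub (continuous_const.mul hvcont).continuousOn)
        (by simp [hf, hB, hv0]) (by fun_prop) (fun t ht => ?_) (fun t ht r hr => ?_)
        (right_mem_Icc.2 zero_le_one)
      · simpa [hB] using ((hasDerivWithinAt_id t (Ici t)).const_mul ε).const_add (φ 0)
      · -- frequently slope f t z < r, knowing ε < r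
        have hslope : ∀ z, t < z → slope f t z ≤ slope φ t z := by
          intro z hz
          rw [slope_def_field, slope_def_field]
          have h1 : v t ≤ v z := hvmono hz.le
          have h2 : (0:ℝ) < z - t := by linarith
          rw [div_le_div_iff_of_pos_right h2]
          simp only [hf]
          nlinarith
        rcases Classical.em (t ∈ U) with htU | htU
        · obtain ⟨δ, hδ, hball⟩ := Metric.isOpen_iff.1 hUo t htU
          refine (Filter.eventually_of_mem (Ioo_mem_nhdsGT_of_mem (show t ∈ Ico t (min (t + δ) 1) from
            ⟨le_refl t, lt_min (by linarith) ht.2⟩)) (fun z hz => ?_)).frequently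
          have hzt : t < z := hz.1
          have hz1 : z ≤ 1 := le_of_lt (lt_of_lt_of_le hz.2 (min_le_right _ _))
          have hztδ : z < t + δ := lt_of_lt_of_le hz.2 (min_le_left _ _)
          have hsub : Ioc t z ⊆ U ∩ Ioc 0 z := by
            rintro s ⟨hs1, hs2⟩
            refine ⟨hball ?_, lt_of_le_of_lt ht.1 hs1, hs2⟩
            rw [Metric.mem_ball, Real.dist_eq, abs_of_pos (by linarith)]
            linarith
          have hdisj : Disjoint (U ∩ Ioc 0 t) (Ioc t z) := by
            refine Set.disjoint_left.2 ?_
            rintro s ⟨_, _, hs2⟩ ⟨hs3, _⟩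
            exact absurd hs3 (not_lt.2 hs2)
          have hmeas : volume (U ∩ Ioc 0 t) + volume (Ioc t z) ≤ volume (U ∩ Ioc 0 z) := by
            rw [← measure_union hdisj measurableSet_Ioc]
            refine measure_mono (union_subset ?_ hsub)
            exact inter_subset_inter_right _ (Ioc_subset_Ioc_right hzt.le)
          have hvz : v t + (z - t) ≤ v z := by
            have h3 := ENNReal.toReal_mono (hUfin z) hmeas
            rwa [ENNReal.toReal_add (hUfin t) (by simp [Real.volume_Ioc]),
              Real.volume_Ioc, ENNReal.toReal_ofReal (by linarith)] at h3
          have hφz : φ z - φ t ≤ L * (z - t) := by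
            have h4 := hφL z ⟨by linarith [ht.1], hz1⟩ t ⟨ht.1, ht.2.le⟩
            rw [abs_of_pos (show (0:ℝ) < z - t by linarith)] at h4
            exact (le_abs_self _).trans h4
          rw [slope_def_field, div_lt_iff₀ (by linarith)]
          have hεr : ε < r := hr
          simp only [Pi.sub_apply, Pi.mul_apply]
          nlinarith [mul_pos (show (0:ℝ) < r by linarith) (show (0:ℝ) < z - t by linarith),
            mul_le_mul_of_nonneg_left hvz (show (0:ℝ) ≤ 2 * L + ε by linarith)]
        · have htN : t ∉ N := fun h => htU (hNU h)
          obtain ⟨φ', hφ', hφ'0⟩ := hd t ht htN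
          have htend : Tendsto (slope φ t) (𝓝[>] t) (𝓝 φ') :=
            (hasDerivAt_iff_tendsto_slope.1 hφ').mono_left
              (nhdsWithin_mono t fun z (hz : t < z) => ne_of_gt hz)
          have hεr : ε < r := hr
          refine ((htend.eventually_lt_const (show φ' < r by linarith)).and
            (eventually_mem_nhdsWithin (s := Ioi t))).mono (fun z hz => ?_) |>.frequently
          exact lt_of_le_of_lt (hslope z hz.2) hz.1
    have hv1 : v 1 ≤ ε := ENNReal.toReal_le_of_le_ofReal hε.le
      ((measure_mono inter_subset_left).trans hU.le)
    have hfB' : φ 1 - (2 * L + ε) * v 1 ≤ φ 0 + ε * 1 := hfB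
    nlinarith [hfB', hv1]
  refine le_of_forall_pos_le_add fun ε' hε' => ?_
  have h2L : (0:ℝ) < 2 * L + 3 := by linarith
  have hεpos : 0 < min (ε' / (2 * L + 3)) 1 := lt_min (div_pos hε' h2L) one_pos
  have h := key _ hεpos
  have h1 : min (ε' / (2 * L + 3)) 1 ≤ ε' / (2 * L + 3) := min_le_left _ _
  have h2 : min (ε' / (2 * L + 3)) 1 ≤ 1 := min_le_right _ _
  have h3 : (ε' / (2 * L + 3)) * (2 * L + 3) = ε' := div_mul_cancel₀ _ h2L.ne'
  nlinarith

lemma limit_ineq {E : Type*} [NormedAddCommGroup E] [InnerProductSpace ℝ E]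
    {α : Type*} {l : Filter α} [l.NeBot]
    {fu gu : α → ℝ} {fw gw fv : α → E} {au bu : ℝ} {aw bw av : E}
    (h1 : Tendsto fu l (𝓝 au)) (h2 : Tendsto gu l (𝓝 bu))
    (h3 : Tendsto fw l (𝓝 aw)) (h4 : Tendsto gw l (𝓝 bw))
    (h5 : Tendsto fv l (𝓝 av))
    (hineq : ∀ᶠ p in l, (1/2) * (gu p - fu p)^2 + (inner ℝ (gw p - fw p) (fv p) : ℝ) ≤ ‖fv p‖^2) :
    (1/2) * (bu - au)^2 + (inner ℝ (bw - aw) av : ℝ) ≤ ‖av‖^2 := by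
  refine le_of_tendsto_of_tendsto ?_ ?_ hineq
  · exact (tendsto_const_nhds.mul ((h2.sub h1).pow 2)).add ((h4.sub h3).inner h5)
  · exact h5.norm.pow 2

set_option maxHeartbeats 1000000 in

set_option maxHeartbeats 1000000 in
theorem stmt5 {d : ℕ} (Ω : Set (EuclideanSpace ℝ (Fin d)))
    (hΩo : IsOpen Ω) (hΩb : Bornology.IsBounded Ω) (hΩc : Convex ℝ Ω) (hΩne : Ω.Nonempty)
    (u : EuclideanSpace ℝ (Fin d) → ℝ) (w : EuclideanSpace ℝ (Fin d) → EuclideanSpace ℝ (Fin d))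
    (Ku Kw : NNReal) (hu : LipschitzOnWith Ku u (closure Ω))
    (hw : LipschitzOnWith Kw w (closure Ω)) :
    (∀ᵐ x ∂volume, x ∈ Ω → DifferentiableAt ℝ u x → DifferentiableAt ℝ w x →
        ∀ τ : EuclideanSpace ℝ (Fin d),
          (1/2) * (fderiv ℝ u x τ)^2 + (inner ℝ (fderiv ℝ w x τ) τ : ℝ) ≤ ‖τ‖^2)
    ↔ (∀ x ∈ closure Ω, ∀ y ∈ closure Ω,
        (1/2) * (u y - u x)^2 + (inner ℝ (w y - w x) (y - x) : ℝ) ≤ ‖y - x‖^2) := by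
  constructor
  · intro H
    have hG : ∀ᵐ x ∂(volume : Measure (EuclideanSpace ℝ (Fin d))), x ∈ Ω →
        (DifferentiableAt ℝ u x ∧ DifferentiableAt ℝ w x ∧
          ∀ τ, (1/2) * (fderiv ℝ u x τ)^2 + (inner ℝ (fderiv ℝ w x τ) τ : ℝ) ≤ ‖τ‖^2) := by
      filter_upwards [H, hu.ae_differentiableWithinAt_of_mem (μ := volume),
        hw.ae_differentiableWithinAt_of_mem (μ := volume)] with x hH hu1 hw1 hxΩ
      have hcl : closure Ω ∈ 𝓝 x := mem_of_superset (hΩo.mem_nhds hxΩ) subset_closure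
      have hdu : DifferentiableAt ℝ u x := (hu1 (subset_closure hxΩ)).differentiableAt hcl
      have hdw : DifferentiableAt ℝ w x := (hw1 (subset_closure hxΩ)).differentiableAt hcl
      exact ⟨hdu, hdw, hH hxΩ hdu hdw⟩
    obtain ⟨Bset, hGB, hBm, hB0⟩ := exists_measurable_superset_of_null (ae_iff.1 hG)
    have hBprop : ∀ x : EuclideanSpace ℝ (Fin d), x ∉ Bset → x ∈ Ω →
        DifferentiableAt ℝ u x ∧ DifferentiableAt ℝ w x ∧
          ∀ τ, (1/2) * (fderiv ℝ u x τ)^2 + (inner ℝ (fderiv ℝ w x τ) τ : ℝ) ≤ ‖τ‖^2 :=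
      fun x hx => not_not.1 fun h => hx (hGB h)
    have main : ∀ x ∈ Ω, ∀ y ∈ Ω,
        (1/2) * (u y - u x)^2 + (inner ℝ (w y - w x) (y - x) : ℝ) ≤ ‖y - x‖^2 := by
      intro x hx y hy
      obtain ⟨ε₁, hε₁, hballx⟩ := Metric.isOpen_iff.1 hΩo x hx
      obtain ⟨ε₂, hε₂, hbally⟩ := Metric.isOpen_iff.1 hΩo y hy
      set τ : EuclideanSpace ℝ (Fin d) := y - x with hτdef
      -- Fubini step
      set S : Set (ℝ × EuclideanSpace ℝ (Fin d)) :=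
        {p : ℝ × EuclideanSpace ℝ (Fin d) | x + p.2 + p.1 • τ ∈ Bset} with hSdef
      have hSm : MeasurableSet S := by
        have hmc : Continuous (fun p : ℝ × EuclideanSpace ℝ (Fin d) => x + p.2 + p.1 • τ) :=
          (continuous_const.add continuous_snd).add (continuous_fst.smul continuous_const)
        exact hmc.measurable hBm
      have hS0 : ((volume : Measure ℝ).prod
          (volume : Measure (EuclideanSpace ℝ (Fin d)))) S = 0 := by
        rw [Measure.measure_prod_null hSm]
        refine Filter.Eventually.of_forall fun t => ?_
        show volume (Prod.mk t ⁻¹' S) = 0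
        have hset : Prod.mk t ⁻¹' S
            = (fun z => (x + t • τ) + z) ⁻¹' Bset := by
          ext z
          simp only [hSdef, Set.mem_preimage, Set.mem_setOf_eq]
          rw [show x + z + t • τ = (x + t • τ) + z by abel]
        rw [hset, measure_preimage_add]
        exact hB0
      have hS'm : MeasurableSet (Prod.swap ⁻¹' S :
          Set (EuclideanSpace ℝ (Fin d) × ℝ)) := measurable_swap hSm
      have hS'0 : ((volume : Measure (EuclideanSpace ℝ (Fin d))).prod
          (volume : Measure ℝ)) (Prod.swap ⁻¹' S) = 0 := by
        rw [← Measure.map_apply measurable_swap hSm, Measure.prod_swap]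
        exact hS0
      have hae : ∀ᵐ z ∂(volume : Measure (EuclideanSpace ℝ (Fin d))),
          volume {t : ℝ | x + z + t • τ ∈ Bset} = 0 := by
        filter_upwards [(Measure.measure_prod_null hS'm).1 hS'0] with z hz
        exact hz
      set good : Set (EuclideanSpace ℝ (Fin d)) :=
        {z | volume {t : ℝ | x + z + t • τ ∈ Bset} = 0} with hgooddef
      have hdense : Dense good := Measure.dense_of_ae hae
      -- claim for good z
      have claim : ∀ z ∈ good, z ∈ ball (0 : EuclideanSpace ℝ (Fin d)) (min ε₁ ε₂) →
          (1/2) * (u (y + z) - u (x + z))^2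
            + (inner ℝ (w (y + z) - w (x + z)) τ : ℝ) ≤ ‖τ‖^2 := by
        intro z hzgood hzball
        have hznorm : ‖z‖ < min ε₁ ε₂ := mem_ball_zero_iff.1 hzball
        have hp : x + z ∈ Ω := hballx (by
          rw [mem_ball, dist_eq_norm, add_sub_cancel_left]
          exact hznorm.trans_le (min_le_left _ _))
        have hq : y + z ∈ Ω := hbally (by
          rw [mem_ball, dist_eq_norm, add_sub_cancel_left]
          exact hznorm.trans_le (min_le_right _ _))
        set γ : ℝ → EuclideanSpace ℝ (Fin d) := fun s => x + z + s • τ with hγdef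
        have hseg : ∀ s ∈ Icc (0:ℝ) 1, γ s ∈ Ω := by
          intro s hs
          have h := hΩc.add_smul_sub_mem hp hq hs
          rwa [show (y + z) - (x + z) = τ by rw [hτdef]; abel] at h
        set c : ℝ := u (y + z) - u (x + z) with hcdef
        set K : ℝ := ‖τ‖^2 + c^2/2 with hKdef
        set φ : ℝ → ℝ := fun s => ((inner ℝ (w (γ s)) τ : ℝ) + c * u (γ s)) - K * s with hφdef
        have hK0 : 0 ≤ K := by positivity
        set L : ℝ := (Kw : ℝ) * ‖τ‖^2 + |c| * ((Ku : ℝ) * ‖τ‖) + K with hLdef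
        have hL : 0 ≤ L := by positivity
        have hφL : ∀ s ∈ Icc (0:ℝ) 1, ∀ t ∈ Icc (0:ℝ) 1, |φ s - φ t| ≤ L * |s - t| := by
          intro s hs t ht
          have hγs := subset_closure (hseg s hs)
          have hγt := subset_closure (hseg t ht)
          have hdγ : dist (γ s) (γ t) = |s - t| * ‖τ‖ := by
            rw [dist_eq_norm, show γ s - γ t = (s - t) • τ by
              simp only [hγdef]; rw [sub_smul]; abel, norm_smul, Real.norm_eq_abs]
          have h1 : |(inner ℝ (w (γ s) - w (γ t)) τ : ℝ)| ≤ ((Kw : ℝ) * (|s - t| * ‖τ‖)) * ‖τ‖ := by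
            refine (abs_real_inner_le_norm _ _).trans
              (mul_le_mul_of_nonneg_right ?_ (norm_nonneg _))
            have h := hw.dist_le_mul _ hγs _ hγt
            rw [hdγ] at h
            rwa [← dist_eq_norm]
          have h2 : |u (γ s) - u (γ t)| ≤ (Ku : ℝ) * (|s - t| * ‖τ‖) := by
            have h := hu.dist_le_mul _ hγs _ hγt
            rw [hdγ] at h
            rwa [← Real.dist_eq]
          have h2' : |c| * |u (γ s) - u (γ t)| ≤ |c| * ((Ku : ℝ) * (|s - t| * ‖τ‖)) :=
            mul_le_mul_of_nonneg_left h2 (abs_nonneg c)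
          have hexp : φ s - φ t = ((inner ℝ (w (γ s) - w (γ t)) τ : ℝ)
              + c * (u (γ s) - u (γ t))) - K * (s - t) := by
            simp only [hφdef, inner_sub_left]; ring
          rw [hexp]
          have h3 : |((inner ℝ (w (γ s) - w (γ t)) τ : ℝ) + c * (u (γ s) - u (γ t))) - K * (s - t)|
              ≤ |(inner ℝ (w (γ s) - w (γ t)) τ : ℝ)| + |c| * |u (γ s) - u (γ t)| + K * |s - t| := by
            refine (abs_sub _ _).trans ?_
            rw [abs_mul, abs_of_nonneg hK0]
            have := abs_add_le ((inner ℝ (w (γ s) - w (γ t)) τ : ℝ)) (c * (u (γ s) - u (γ t)))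
            rw [abs_mul] at this
            linarith
          refine h3.trans ?_
          rw [hLdef]
          nlinarith [h1, h2', abs_nonneg (s - t), norm_nonneg τ]
        have hN0 : volume {t : ℝ | γ t ∈ Bset} = 0 := hzgood
        have hderiv : ∀ t ∈ Ico (0:ℝ) 1, t ∉ {t : ℝ | γ t ∈ Bset} →
            ∃ φ', HasDerivAt φ φ' t ∧ φ' ≤ 0 := by
          intro t ht htN
          obtain ⟨hdu, hdw, hineq⟩ := hBprop (γ t) htN (hseg t (Ico_subset_Icc_self ht))
          have hγd : HasDerivAt γ τ t := by
            simpa [hγdef] using ((hasDerivAt_id t).smul_const τ).const_add (x + z)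
          have hud : HasDerivAt (fun s => u (γ s)) (fderiv ℝ u (γ t) τ) t :=
            hdu.hasFDerivAt.comp_hasDerivAt t hγd
          have hwd : HasDerivAt (fun s => w (γ s)) (fderiv ℝ w (γ t) τ) t :=
            hdw.hasFDerivAt.comp_hasDerivAt t hγd
          have hwi : HasDerivAt (fun s => (inner ℝ (w (γ s)) τ : ℝ))
              ((inner ℝ (fderiv ℝ w (γ t) τ) τ : ℝ)) t := by
            simpa using hwd.inner ℝ (hasDerivAt_const t τ)
          refine ⟨(inner ℝ (fderiv ℝ w (γ t) τ) τ : ℝ) + c * (fderiv ℝ u (γ t) τ) - K, ?_, ?_⟩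
          · exact (hwi.add (hud.const_mul c)).sub
              (by simpa using (hasDerivAt_id t).const_mul K)
          · have h := hineq τ
            have hsq := sq_nonneg ((fderiv ℝ u (γ t)) τ - c)
            rw [hKdef]
            clear_value τ c K γ
            nlinarith [h, hsq]
        have hmono := aux_nonincr hL hφL hN0 hderiv
        have hγ1 : γ 1 = y + z := by
          simp only [hγdef, one_smul, hτdef]; abel
        have hγ0 : γ 0 = x + z := by simp [hγdef]
        have h' : ((inner ℝ (w (y + z)) τ : ℝ) + c * u (y + z)) - K * 1
            ≤ ((inner ℝ (w (x + z)) τ : ℝ) + c * u (x + z)) - K * 0 := by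
          have e1 : φ 1 = ((inner ℝ (w (y + z)) τ : ℝ) + c * u (y + z)) - K * 1 := by
            rw [hφdef]; simp only [hγ1]
          have e0 : φ 0 = ((inner ℝ (w (x + z)) τ : ℝ) + c * u (x + z)) - K * 0 := by
            rw [hφdef]; simp only [hγ0]
          rw [← e1, ← e0]; exact hmono
        have hcc : c * u (y + z) - c * u (x + z) = c^2 := by rw [hcdef]; ring
        rw [inner_sub_left]
        have hKval : K = ‖τ‖^2 + c^2/2 := hKdef
        clear_value τ c K
        linarith [h', hcc, hKval.ge, hKval.le]
      -- limit z → 0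
      haveI : (𝓝[good] (0 : EuclideanSpace ℝ (Fin d))).NeBot :=
        mem_closure_iff_nhdsWithin_neBot.1 (hdense 0)
      have hball_mem : ball (0 : EuclideanSpace ℝ (Fin d)) (min ε₁ ε₂) ∈
          𝓝[good] (0 : EuclideanSpace ℝ (Fin d)) :=
        mem_nhdsWithin_of_mem_nhds (ball_mem_nhds 0 (lt_min hε₁ hε₂))
      have hxz : Tendsto (fun z : EuclideanSpace ℝ (Fin d) => x + z) (𝓝[good] 0)
          (𝓝[closure Ω] x) := by
        rw [tendsto_nhdsWithin_iff]
        constructor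
        · have h : Tendsto (fun z : EuclideanSpace ℝ (Fin d) => x + z) (𝓝 0) (𝓝 (x + 0)) :=
            (continuous_const.add continuous_id).tendsto 0
          simp only [add_zero] at h
          exact h.mono_left nhdsWithin_le_nhds
        · filter_upwards [hball_mem] with z hz
          exact subset_closure (hballx (by
            rw [mem_ball, dist_eq_norm, add_sub_cancel_left]
            exact (mem_ball_zero_iff.1 hz).trans_le (min_le_left _ _)))
      have hyz : Tendsto (fun z : EuclideanSpace ℝ (Fin d) => y + z) (𝓝[good] 0)
          (𝓝[closure Ω] y) := by
        rw [tendsto_nhdsWithin_iff]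
        constructor
        · have h : Tendsto (fun z : EuclideanSpace ℝ (Fin d) => y + z) (𝓝 0) (𝓝 (y + 0)) :=
            (continuous_const.add continuous_id).tendsto 0
          simp only [add_zero] at h
          exact h.mono_left nhdsWithin_le_nhds
        · filter_upwards [hball_mem] with z hz
          exact subset_closure (hbally (by
            rw [mem_ball, dist_eq_norm, add_sub_cancel_left]
            exact (mem_ball_zero_iff.1 hz).trans_le (min_le_right _ _)))
      have hcu : ContinuousOn u (closure Ω) := hu.continuousOn
      have hcw : ContinuousOn w (closure Ω) := hw.continuousOn
      refine limit_ineq (fv := fun _ => τ)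
        ((hcu x (subset_closure hx)).tendsto.comp hxz)
        ((hcu y (subset_closure hy)).tendsto.comp hyz)
        ((hcw x (subset_closure hx)).tendsto.comp hxz)
        ((hcw y (subset_closure hy)).tendsto.comp hyz)
        tendsto_const_nhds ?_
      filter_upwards [self_mem_nhdsWithin, hball_mem] with z hz1 hz2
      exact claim z hz1 hz2
    -- extend to closure
    intro x hx y hy
    haveI h1 : (𝓝[Ω] x).NeBot := mem_closure_iff_nhdsWithin_neBot.1 hx
    haveI h2 : (𝓝[Ω] y).NeBot := mem_closure_iff_nhdsWithin_neBot.1 hy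
    set l : Filter (EuclideanSpace ℝ (Fin d) × EuclideanSpace ℝ (Fin d)) :=
      (𝓝[Ω] x) ×ˢ (𝓝[Ω] y) with hldef
    haveI : l.NeBot := Filter.prod_neBot.2 ⟨h1, h2⟩
    have hfst : Tendsto (Prod.fst : _ × EuclideanSpace ℝ (Fin d) → _) l (𝓝[Ω] x) :=
      tendsto_fst
    have hsnd : Tendsto (Prod.snd : EuclideanSpace ℝ (Fin d) × _ → _) l (𝓝[Ω] y) :=
      tendsto_snd
    have hfst' : Tendsto (Prod.fst : _ × EuclideanSpace ℝ (Fin d) → _) l (𝓝[closure Ω] x) :=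
      hfst.mono_right (nhdsWithin_mono x subset_closure)
    have hsnd' : Tendsto (Prod.snd : EuclideanSpace ℝ (Fin d) × _ → _) l (𝓝[closure Ω] y) :=
      hsnd.mono_right (nhdsWithin_mono y subset_closure)
    have hcu : ContinuousOn u (closure Ω) := hu.continuousOn
    have hcw : ContinuousOn w (closure Ω) := hw.continuousOn
    refine limit_ineq (fv := fun p => p.2 - p.1)
      ((hcu x hx).tendsto.comp hfst') ((hcu y hy).tendsto.comp hsnd')
      ((hcw x hx).tendsto.comp hfst') ((hcw y hy).tendsto.comp hsnd')
      ((hsnd.mono_right nhdsWithin_le_nhds).sub (hfst.mono_right nhdsWithin_le_nhds)) ?_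
    filter_upwards [hfst.eventually eventually_mem_nhdsWithin,
      hsnd.eventually eventually_mem_nhdsWithin] with p hp1 hp2
    exact main p.1 hp1 p.2 hp2
  · intro H
    refine Filter.Eventually.of_forall fun x hxΩ hdu hdw τ => ?_
    set γ : ℝ → EuclideanSpace ℝ (Fin d) := fun t => x + t • τ with hγdef
    have hγ : ∀ t, HasDerivAt γ τ t := fun t => by
      simpa [hγdef] using ((hasDerivAt_id t).smul_const τ).const_add x
    have hγ0 : γ 0 = x := by simp [hγdef]
    have hu' : HasDerivAt (fun t => u (γ t)) (fderiv ℝ u x τ) 0 :=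
      (hγ0 ▸ hdu.hasFDerivAt : HasFDerivAt u (fderiv ℝ u x) (γ 0)).comp_hasDerivAt 0 (hγ 0)
    have hw' : HasDerivAt (fun t => w (γ t)) (fderiv ℝ w x τ) 0 :=
      (hγ0 ▸ hdw.hasFDerivAt : HasFDerivAt w (fderiv ℝ w x) (γ 0)).comp_hasDerivAt 0 (hγ 0)
    have hsu : Tendsto (slope (fun t => u (γ t)) 0) (𝓝[>] 0) (𝓝 (fderiv ℝ u x τ)) :=
      (hasDerivAt_iff_tendsto_slope.1 hu').mono_left
        (nhdsWithin_mono 0 fun z (hz : (0:ℝ) < z) => ne_of_gt hz)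
    have hsw : Tendsto (slope (fun t => w (γ t)) 0) (𝓝[>] 0) (𝓝 (fderiv ℝ w x τ)) :=
      (hasDerivAt_iff_tendsto_slope.1 hw').mono_left
        (nhdsWithin_mono 0 fun z (hz : (0:ℝ) < z) => ne_of_gt hz)
    have hev : ∀ᶠ t in 𝓝[>] (0:ℝ),
        (1/2) * (slope (fun s => u (γ s)) 0 t)^2
          + (inner ℝ (slope (fun s => w (γ s)) 0 t) τ : ℝ) ≤ ‖τ‖^2 := by
      have hγc : Continuous γ := by fun_prop
      have hmem : ∀ᶠ t in 𝓝 (0:ℝ), γ t ∈ Ω :=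
        hγc.continuousAt.preimage_mem_nhds (hΩo.mem_nhds (hγ0 ▸ hxΩ))
      filter_upwards [hmem.filter_mono nhdsWithin_le_nhds,
        self_mem_nhdsWithin] with t htΩ (ht : (0:ℝ) < t)
      have h := H x (subset_closure hxΩ) (γ t) (subset_closure htΩ)
      have hsub : γ t - x = t • τ := by simp [hγdef]
      rw [hsub, inner_smul_right, norm_smul, Real.norm_eq_abs, abs_of_pos ht] at h
      rw [slope_def_field, slope_def_module, hγ0]
      rw [inner_smul_left, RCLike.conj_to_real]
      simp only [sub_zero]
      have ht2 : (0:ℝ) < t^2 := by positivity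
      have hne : t ≠ 0 := ne_of_gt ht
      have hmul := mul_le_mul_of_nonneg_left h (le_of_lt (show (0:ℝ) < (t^2)⁻¹ by positivity))
      calc 1 / 2 * ((u (γ t) - u x) / t) ^ 2 + t⁻¹ * (inner ℝ (w (γ t) - w x) τ : ℝ)
          = (t^2)⁻¹ * (1 / 2 * (u (γ t) - u x) ^ 2 + t * (inner ℝ (w (γ t) - w x) τ : ℝ)) := by
            field_simp
        _ ≤ (t^2)⁻¹ * ((t * ‖τ‖)^2) := hmul
        _ = ‖τ‖^2 := by field_simp
    have : Tendsto (fun t => (1/2) * (slope (fun s => u (γ s)) 0 t)^2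
        + (inner ℝ (slope (fun s => w (γ s)) 0 t) τ : ℝ)) (𝓝[>] (0:ℝ))
        (𝓝 ((1/2) * (fderiv ℝ u x τ)^2 + (inner ℝ (fderiv ℝ w x τ) τ : ℝ))) :=
      (tendsto_const_nhds.mul (hsu.pow 2)).add (hsw.inner tendsto_const_nhds)
    exact le_of_tendsto this hev
end

section
/- Let Ω ⊂ ℝ^d be a bounded convex open set of diameter R, and let (u,w) be continuous on closure(Ω) with w = 0 on ∂Ω, satisfying the two-point condition (1/2)|u(y) − u(x)|² + ⟨w(y) − w(x), y − x⟩ ≤ |x − y|² for all x,y ∈ closure(Ω). Then |w(x)| ≤ R for every x ∈ closure(Ω). -/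
theorem stmt7 {d : ℕ} (Ω : Set (EuclideanSpace ℝ (Fin d)))
    (hΩo : IsOpen Ω) (hΩb : Bornology.IsBounded Ω) (hΩc : Convex ℝ Ω) (hΩne : Ω.Nonempty)
    (u : EuclideanSpace ℝ (Fin d) → ℝ) (w : EuclideanSpace ℝ (Fin d) → EuclideanSpace ℝ (Fin d))
    (hu : ContinuousOn u (closure Ω)) (hw : ContinuousOn w (closure Ω))
    (hw0 : ∀ x ∈ frontier Ω, w x = 0)
    (h2p : ∀ x ∈ closure Ω, ∀ y ∈ closure Ω,
      (1/2) * (u y - u x)^2 + (inner ℝ (w y - w x) (y - x) : ℝ) ≤ ‖y - x‖^2) :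
    ∀ x ∈ closure Ω, ‖w x‖ ≤ Metric.diam Ω := by
  intro x hx
  rcases eq_or_ne (w x) 0 with h0 | h0
  · simp [h0, Metric.diam_nonneg]
  have hwx : (0:ℝ) < ‖w x‖ := norm_pos_iff.mpr h0
  set τ : EuclideanSpace ℝ (Fin d) := -(‖w x‖⁻¹ • w x) with hτ
  have hτn : ‖τ‖ = 1 := by
    simp [hτ, norm_smul, abs_of_nonneg (inv_nonneg.mpr (norm_nonneg _)),
      inv_mul_cancel₀ hwx.ne']
  set S : Set ℝ := Set.Ici 0 ∩ (fun t : ℝ => x + t • τ) ⁻¹' closure Ω with hS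
  have h0S : (0:ℝ) ∈ S := ⟨Set.mem_Ici.mpr le_rfl, by simpa using hx⟩
  obtain ⟨C, hC⟩ := hΩb.closure.subset_closedBall 0
  have hSb : BddAbove S := by
    refine ⟨C + ‖x‖, fun t ht => ?_⟩
    have h1 : ‖x + t • τ‖ ≤ C := by
      simpa [dist_eq_norm] using hC ht.2
    have h2 : t = ‖(x + t • τ) - x‖ := by
      simp [norm_smul, hτn, abs_of_nonneg (Set.mem_Ici.mp ht.1)]
    calc t = ‖(x + t • τ) - x‖ := h2
      _ ≤ ‖x + t • τ‖ + ‖x‖ := norm_sub_le _ _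
      _ ≤ C + ‖x‖ := by linarith
  have hScl : IsClosed S := by
    exact isClosed_Ici.inter (isClosed_closure.preimage (by continuity))
  set t : ℝ := sSup S with ht
  have htS : t ∈ S := hScl.csSup_mem ⟨0, h0S⟩ hSb
  set y : EuclideanSpace ℝ (Fin d) := x + t • τ with hy
  have hyc : y ∈ closure Ω := htS.2
  have hyΩ : y ∉ Ω := by
    intro hmem
    obtain ⟨ε, hε, hball⟩ := Metric.isOpen_iff.mp hΩo y hmem
    have hmem' : x + (t + ε/2) • τ ∈ Ω := by
      apply hball
      have hd : x + (t + ε/2) • τ - y = (ε/2) • τ := by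
        rw [hy, add_smul]; abel
      have : dist (x + (t + ε/2) • τ) y = ε/2 := by
        rw [dist_eq_norm, hd, norm_smul, hτn, mul_one, Real.norm_eq_abs,
          abs_of_nonneg (by linarith)]
      rw [Metric.mem_ball, this]; linarith
    have hmemS : t + ε/2 ∈ S := ⟨Set.mem_Ici.mpr (by linarith [Set.mem_Ici.mp htS.1]), subset_closure hmem'⟩
    have hle : t + ε/2 ≤ t := le_csSup hSb hmemS
    linarith
  have hyf : y ∈ frontier Ω := by
    rw [hΩo.frontier_eq]; exact ⟨hyc, hyΩ⟩
  have hwy : w y = 0 := hw0 y hyf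
  rcases eq_or_lt_of_le (Set.mem_Ici.mp htS.1) with heq | hpos
  · exfalso
    have : y = x := by simp [hy, ← heq]
    exact h0 (this ▸ hwy)
  -- compute inner product and norm
  have hinner : (inner ℝ (w y - w x) (y - x) : ℝ) = t * ‖w x‖ := by
    have : y - x = t • τ := by simp [hy]
    rw [this, hwy, zero_sub, hτ]
    rw [real_inner_smul_right, inner_neg_neg, real_inner_smul_right,
      real_inner_self_eq_norm_sq]
    field_simp
  have hnorm : ‖y - x‖ = t := by
    have : y - x = t • τ := by simp [hy]
    rw [this, norm_smul, hτn, mul_one, Real.norm_eq_abs, abs_of_nonneg htS.1]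
  have key := h2p x hx y hyc
  rw [hinner, hnorm] at key
  have hsq : (0:ℝ) ≤ (1/2) * (u y - u x)^2 := by positivity
  have : t * ‖w x‖ ≤ t^2 := by nlinarith
  have hwxt : ‖w x‖ ≤ t := by
    have := mul_le_mul_iff_right₀ hpos |>.mp (by nlinarith : t * ‖w x‖ ≤ t * t)
    exact this
  calc ‖w x‖ ≤ t := hwxt
    _ = dist y x := by rw [dist_eq_norm, hnorm]
    _ ≤ Metric.diam (closure Ω) := Metric.dist_le_diam_of_mem hΩb.closure hyc hx
    _ = Metric.diam Ω := Metric.diam_closure Ω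
end

section
/- Let Ω ⊂ ℝ^d be a bounded convex open set of diameter R, and let (u,w) be continuous on closure(Ω) with w = 0 on ∂Ω, satisfying the two-point condition (1/2)|u(y) − u(x)|² + ⟨w(y) − w(x), y − x⟩ ≤ |x − y|² for all x,y ∈ closure(Ω). Then u is (1/2)-Hölder continuous with |u(x) − u(y)| ≤ √(2R)·|x − y|^{1/2} for all x,y ∈ closure(Ω). -/
set_option maxHeartbeats 800000

theorem stmt8 {d : ℕ} (Ω : Set (EuclideanSpace ℝ (Fin d)))
    (hΩo : IsOpen Ω) (hΩb : Bornology.IsBounded Ω) (hΩc : Convex ℝ Ω) (hΩne : Ω.Nonempty)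
    (u : EuclideanSpace ℝ (Fin d) → ℝ) (w : EuclideanSpace ℝ (Fin d) → EuclideanSpace ℝ (Fin d))
    (hu : ContinuousOn u (closure Ω)) (hw : ContinuousOn w (closure Ω))
    (hw0 : ∀ x ∈ frontier Ω, w x = 0)
    (h2p : ∀ x ∈ closure Ω, ∀ y ∈ closure Ω,
      (1/2) * (u y - u x)^2 + (inner ℝ (w y - w x) (y - x) : ℝ) ≤ ‖y - x‖^2) :
    ∀ x ∈ closure Ω, ∀ y ∈ closure Ω,
      |u x - u y| ≤ Real.sqrt (2 * Metric.diam Ω) * Real.sqrt ‖x - y‖ := by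
  intro x hx y hy
  rcases eq_or_ne x y with rfl | hxy
  · simp [Real.sqrt_nonneg]
  set R := Metric.diam Ω with hR
  have hRnn : 0 ≤ R := Metric.diam_nonneg
  set t₀ := ‖x - y‖ with ht₀
  have ht₀pos : 0 < t₀ := by
    rw [ht₀, norm_pos_iff, sub_ne_zero]; exact hxy
  have hyx : ‖y - x‖ = t₀ := by rw [ht₀, norm_sub_rev]
  set e : EuclideanSpace ℝ (Fin d) := t₀⁻¹ • (y - x) with he_def
  have he : ‖e‖ = 1 := by
    rw [he_def, norm_smul, hyx, norm_inv, Real.norm_eq_abs, abs_of_pos ht₀pos,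
      inv_mul_cancel₀ ht₀pos.ne']
  have hye : x + t₀ • e = y := by
    rw [he_def, smul_smul, mul_inv_cancel₀ ht₀pos.ne', one_smul]; abel
  set S : Set ℝ := {t | x + t • e ∈ closure Ω} with hS_def
  have hS_closed : IsClosed S := by
    have : Continuous fun t : ℝ => x + t • e := by continuity
    exact isClosed_closure.preimage this
  have hS_bdd : ∀ t ∈ S, |t| ≤ R := by
    intro t ht
    have hd := Metric.dist_le_diam_of_mem hΩb.closure ht hx
    rwa [Metric.diam_closure, dist_eq_norm, add_sub_cancel_left, norm_smul, he, mul_one,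
      Real.norm_eq_abs] at hd
  have hbdda : BddAbove S := ⟨R, fun t ht => (le_abs_self t).trans (hS_bdd t ht)⟩
  have hbddb : BddBelow S := ⟨-R, fun t ht => neg_le_of_abs_le (hS_bdd t ht)⟩
  have h0S : (0 : ℝ) ∈ S := by simpa [hS_def] using hx
  have ht₀S : t₀ ∈ S := by rw [hS_def, Set.mem_setOf_eq, hye]; exact hy
  set T := sSup S with hT
  set T' := sInf S with hT'
  have hTS : T ∈ S := hS_closed.csSup_mem ⟨0, h0S⟩ hbdda
  have hT'S : T' ∈ S := hS_closed.csInf_mem ⟨0, h0S⟩ hbddb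
  have hTt₀ : t₀ ≤ T := le_csSup hbdda ht₀S
  have hT'0 : T' ≤ 0 := csInf_le hbddb h0S
  -- frontier points
  have hfront : ∀ t, t ∈ S → (∀ s ∈ S, s ≤ t ∨ t ≤ s) → (x + t • e ∈ Ω → False) →
      x + t • e ∈ frontier Ω := by
    intro t htS _ hnot
    rw [hΩo.frontier_eq]
    exact ⟨htS, hnot⟩
  have hbf : x + T • e ∈ frontier Ω := by
    rw [hΩo.frontier_eq]
    refine ⟨hTS, fun hb => ?_⟩
    obtain ⟨r, hr, hball⟩ := Metric.isOpen_iff.mp hΩo _ hb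
    have hmem : T + r / 2 ∈ S := by
      have : x + (T + r / 2) • e ∈ Metric.ball (x + T • e) r := by
        rw [Metric.mem_ball, dist_eq_norm]
        have : x + (T + r / 2) • e - (x + T • e) = (r / 2) • e := by
          rw [add_smul]; abel
        rw [this, norm_smul, he, mul_one, Real.norm_eq_abs, abs_of_pos (by linarith)]
        linarith
      exact subset_closure (hball this)
    have := le_csSup hbdda hmem
    linarith
  have haf : x + T' • e ∈ frontier Ω := by
    rw [hΩo.frontier_eq]
    refine ⟨hT'S, fun hb => ?_⟩
    obtain ⟨r, hr, hball⟩ := Metric.isOpen_iff.mp hΩo _ hb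
    have hmem : T' - r / 2 ∈ S := by
      have : x + (T' - r / 2) • e ∈ Metric.ball (x + T' • e) r := by
        rw [Metric.mem_ball, dist_eq_norm]
        have : x + (T' - r / 2) • e - (x + T' • e) = (-(r / 2)) • e := by
          simp only [sub_smul, neg_smul]; abel
        rw [this, norm_smul, he, mul_one, Real.norm_eq_abs, abs_of_neg (by linarith)]
        linarith
      exact subset_closure (hball this)
    have := csInf_le hbddb hmem
    linarith
  have hwb : w (x + T • e) = 0 := hw0 _ hbf
  have hwa : w (x + T' • e) = 0 := hw0 _ haf
  -- bound on ⟪w y, e⟫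
  have hwy : -(T - t₀) ≤ (inner ℝ (w y) e : ℝ) := by
    rcases eq_or_lt_of_le hTt₀ with heq | hlt
    · have : y = x + T • e := by rw [← heq, hye]
      rw [this, hwb]
      simp [heq]
    · have hcl : x + T • e ∈ closure Ω := hTS
      have h := h2p y hy _ hcl
      have hd : x + T • e - y = (T - t₀) • e := by
        rw [← hye, sub_smul]; abel
      rw [hd, hwb, zero_sub, norm_smul, he, mul_one, Real.norm_eq_abs,
        abs_of_pos (by linarith), real_inner_smul_right, inner_neg_left] at h
      have hsq : 0 ≤ (1/2) * (u (x + T • e) - u y)^2 := by positivity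
      have h2 : (T - t₀) * (-(inner ℝ (w y) e : ℝ)) ≤ (T - t₀)^2 := by nlinarith
      have := (mul_le_mul_iff_right₀ (by linarith : (0:ℝ) < T - t₀)).mp
        (by nlinarith : (T - t₀) * (-(inner ℝ (w y) e : ℝ)) ≤ (T - t₀) * (T - t₀))
      linarith
  -- bound on ⟪w x, e⟫
  have hwx : (inner ℝ (w x) e : ℝ) ≤ -T' := by
    rcases eq_or_lt_of_le hT'0 with heq | hlt
    · have : x = x + T' • e := by rw [heq]; simp
      rw [this, hwa]
      simp [heq]
    · have hcl : x + T' • e ∈ closure Ω := hT'S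
      have h := h2p _ hcl x hx
      have hd : x - (x + T' • e) = (-T') • e := by
        rw [neg_smul]; abel
      rw [hd, hwa, sub_zero, norm_smul, he, mul_one, Real.norm_eq_abs,
        abs_of_pos (by linarith), real_inner_smul_right] at h
      have hsq : 0 ≤ (1/2) * (u x - u (x + T' • e))^2 := by positivity
      have := (mul_le_mul_iff_right₀ (by linarith : (0:ℝ) < -T')).mp
        (by nlinarith : (-T') * (inner ℝ (w x) e : ℝ) ≤ (-T') * (-T'))
      linarith
  -- diameter bound on T - T'
  have hTT' : T - T' ≤ R := by
    have hd := Metric.dist_le_diam_of_mem hΩb.closure (hTS : x + T • e ∈ closure Ω)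
      (hT'S : x + T' • e ∈ closure Ω)
    have heq : x + T • e - (x + T' • e) = (T - T') • e := by
      rw [sub_smul]; abel
    rwa [Metric.diam_closure, dist_eq_norm, heq, norm_smul, he, mul_one, Real.norm_eq_abs,
      abs_of_pos (by linarith)] at hd
  -- main inequality
  have hmain := h2p x hx y hy
  have hysub : y - x = t₀ • e := by rw [← hye]; abel
  rw [hysub, norm_smul, he, mul_one, Real.norm_eq_abs, abs_of_pos ht₀pos,
    real_inner_smul_right, inner_sub_left] at hmain
  have hkey : (u y - u x)^2 ≤ 2 * R * t₀ := by nlinarith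
  have habs : |u x - u y| ≤ Real.sqrt (2 * R * t₀) := by
    rw [← Real.sqrt_sq_eq_abs]
    apply Real.sqrt_le_sqrt
    nlinarith
  calc |u x - u y| ≤ Real.sqrt (2 * R * t₀) := habs
    _ = Real.sqrt (2 * R) * Real.sqrt t₀ := Real.sqrt_mul (by positivity) _
end

section
/- Let Ω ⊂ ℝ^d be a bounded convex open set with diameter R, and let v be a maximal monotone map on ℝ^d equal to the identity outside closure(Ω). Then for all a, b ∈ closure(Ω), ℓ_v(a,b) ≤ √(2R)·|b − a|^{1/2}, and for all a, b ∈ ℝ^d, ℓ_v(a,b) ≤ √2·|b−a|^{1/2}·(R + |b−a|)^{1/2}. -/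
/-- A set-valued map on `ℝ^d` is monotone. -/
def MonotoneSetMap {d : ℕ} (v : EuclideanSpace ℝ (Fin d) → Set (EuclideanSpace ℝ (Fin d))) :
    Prop :=
  ∀ x₁ x₂ y₁ y₂, y₁ ∈ v x₁ → y₂ ∈ v x₂ → 0 ≤ (inner ℝ (y₁ - y₂) (x₁ - x₂) : ℝ)

/-- Maximal monotone set-valued map with full domain. -/
def MaxMonotone {d : ℕ} (v : EuclideanSpace ℝ (Fin d) → Set (EuclideanSpace ℝ (Fin d))) :
    Prop :=
  MonotoneSetMap v ∧ (∀ x, (v x).Nonempty) ∧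
    ∀ w : EuclideanSpace ℝ (Fin d) → Set (EuclideanSpace ℝ (Fin d)),
      MonotoneSetMap w → (∀ x, v x ⊆ w x) → w = v

/-- `ℓ_v(a,b) := inf { √(2⟨b' − a', b − a⟩) : a' ∈ v(a), b' ∈ v(b) }`. -/
noncomputable def ellV {d : ℕ} (v : EuclideanSpace ℝ (Fin d) → Set (EuclideanSpace ℝ (Fin d)))
    (a b : EuclideanSpace ℝ (Fin d)) : ℝ :=
  sInf {r : ℝ | ∃ a' ∈ v a, ∃ b' ∈ v b, r = Real.sqrt (2 * (inner ℝ (b' - a') (b - a) : ℝ))}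

/-- `c_v(a,b)`: infimum over finite chains joining `a` to `b` of the sums of `ℓ_v`. -/
noncomputable def costV {d : ℕ} (v : EuclideanSpace ℝ (Fin d) → Set (EuclideanSpace ℝ (Fin d)))
    (a b : EuclideanSpace ℝ (Fin d)) : ℝ :=
  sInf {r : ℝ | ∃ (N : ℕ) (x : ℕ → EuclideanSpace ℝ (Fin d)), 0 < N ∧ x 0 = a ∧ x N = b ∧
    r = ∑ i ∈ Finset.range N, ellV v (x i) (x (i+1))}

/-- `ellV` is bounded by any single candidate value. -/
lemma ellV_le {d : ℕ} {v : EuclideanSpace ℝ (Fin d) → Set (EuclideanSpace ℝ (Fin d))}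
    {a b a' b' : EuclideanSpace ℝ (Fin d)} (ha' : a' ∈ v a) (hb' : b' ∈ v b) :
    ellV v a b ≤ Real.sqrt (2 * (inner ℝ (b' - a') (b - a) : ℝ)) := by
  apply csInf_le
  · refine ⟨0, ?_⟩
    rintro r ⟨x, hx, y, hy, rfl⟩
    exact Real.sqrt_nonneg _
  · exact ⟨a', ha', b', hb', rfl⟩

/-- monotone map bounded by identity outside `closure Ω`: upper bound. -/
lemma key_out_plus {d : ℕ} {Ω : Set (EuclideanSpace ℝ (Fin d))}
    {v : EuclideanSpace ℝ (Fin d) → Set (EuclideanSpace ℝ (Fin d))}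
    (hmono : MonotoneSetMap v) (hid : ∀ x ∉ closure Ω, v x = {x})
    {x x' e : EuclideanSpace ℝ (Fin d)} (he : ‖e‖ = 1) (hx' : x' ∈ v x)
    {s : ℝ} (hs : 0 < s) (hout : x + s • e ∉ closure Ω) :
    (inner ℝ (x' - x) e : ℝ) ≤ s := by
  have hmem : x + s • e ∈ v (x + s • e) := by rw [hid _ hout]; rfl
  have h0 : (0:ℝ) ≤ inner ℝ (x' - (x + s • e)) (x - (x + s • e)) :=
    hmono _ _ _ _ hx' hmem
  have h1 : x' - (x + s • e) = (x' - x) - s • e := by abel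
  have h2 : x - (x + s • e) = -(s • e) := by abel
  rw [h1, h2, inner_neg_right, real_inner_smul_right, inner_sub_left,
    real_inner_smul_left, real_inner_self_eq_norm_sq, he] at h0
  nlinarith [h0]

/-- monotone map bounded by identity outside `closure Ω`: lower bound. -/
lemma key_out_minus {d : ℕ} {Ω : Set (EuclideanSpace ℝ (Fin d))}
    {v : EuclideanSpace ℝ (Fin d) → Set (EuclideanSpace ℝ (Fin d))}
    (hmono : MonotoneSetMap v) (hid : ∀ x ∉ closure Ω, v x = {x})
    {x x' e : EuclideanSpace ℝ (Fin d)} (he : ‖e‖ = 1) (hx' : x' ∈ v x)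
    {s : ℝ} (hs : 0 < s) (hout : x - s • e ∉ closure Ω) :
    (inner ℝ (x - x') e : ℝ) ≤ s := by
  have he' : ‖-e‖ = 1 := by rwa [norm_neg]
  have hout' : x + s • (-e) ∉ closure Ω := by
    rwa [smul_neg, ← sub_eq_add_neg]
  have h := key_out_plus hmono hid he' hx' hs hout'
  rw [inner_neg_right] at h
  have h2 : (inner ℝ (x - x') e : ℝ) = -inner ℝ (x' - x) e := by
    rw [← inner_neg_left]; congr 1; abel
  linarith [h, h2.le, h2.ge]

/-- Key bound for `a, b ∈ closure Ω`. -/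
lemma inner_le_diam {d : ℕ} {Ω : Set (EuclideanSpace ℝ (Fin d))}
    (hΩb : Bornology.IsBounded Ω)
    {v : EuclideanSpace ℝ (Fin d) → Set (EuclideanSpace ℝ (Fin d))}
    (hmono : MonotoneSetMap v) (hid : ∀ x ∉ closure Ω, v x = {x})
    {a b a' b' : EuclideanSpace ℝ (Fin d)}
    (ha : a ∈ closure Ω) (hb : b ∈ closure Ω) (ha' : a' ∈ v a) (hb' : b' ∈ v b) :
    (inner ℝ (b' - a') (b - a) : ℝ) ≤ Metric.diam Ω * ‖b - a‖ := by
  rcases eq_or_ne b a with rfl | hne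
  · simp [Metric.diam_nonneg]
  have hm : (0:ℝ) < ‖b - a‖ := by
    rw [norm_pos_iff]; exact sub_ne_zero.mpr hne
  set m : ℝ := ‖b - a‖ with hmdef
  set R : ℝ := Metric.diam Ω with hRdef
  have hR0 : 0 ≤ R := Metric.diam_nonneg
  have hclb : Bornology.IsBounded (closure Ω) := hΩb.closure
  have hdist : ∀ x ∈ closure Ω, ∀ y ∈ closure Ω, dist x y ≤ R := by
    intro x hx y hy
    have := Metric.dist_le_diam_of_mem hclb hx hy
    rwa [Metric.diam_closure] at this
  set e : EuclideanSpace ℝ (Fin d) := (m : ℝ)⁻¹ • (b - a) with hedef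
  have he : ‖e‖ = 1 := norm_smul_inv_norm (sub_ne_zero.mpr hne)
  have hba : m • e = b - a := by
    rw [hedef, smul_smul, mul_inv_cancel₀ hm.ne', one_smul]
  have hbe : b = a + m • e := by rw [hba]; abel
  set S : Set ℝ := {s : ℝ | a + s • e ∈ closure Ω} with hSdef
  have h0S : (0:ℝ) ∈ S := by simp [hSdef, ha]
  have hmS : m ∈ S := by simpa [hSdef, ← hbe] using hb
  have habs : ∀ s ∈ S, |s| ≤ R := by
    intro s hs
    have h1 : dist (a + s • e) a ≤ R := hdist _ hs _ ha
    have h2 : dist (a + s • e) a = |s| := by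
      rw [dist_eq_norm]
      have : a + s • e - a = s • e := by abel
      rw [this, norm_smul, he, mul_one, Real.norm_eq_abs]
    linarith [h2 ▸ h1]
  have hbddA : BddAbove S := ⟨R, fun s hs => (abs_le.mp (habs s hs)).2⟩
  have hbddB : BddBelow S := ⟨-R, fun s hs => (abs_le.mp (habs s hs)).1⟩
  have hScl : IsClosed S := by
    have : S = (fun s : ℝ => a + s • e) ⁻¹' closure Ω := rfl
    rw [this]
    exact isClosed_closure.preimage (continuous_const.add (continuous_id.smul continuous_const))
  set sp : ℝ := sSup S with hspdef
  set sq : ℝ := sInf S with hsqdef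
  have hspS : sp ∈ S := hScl.csSup_mem ⟨0, h0S⟩ hbddA
  have hsqS : sq ∈ S := hScl.csInf_mem ⟨0, h0S⟩ hbddB
  have hmsp : m ≤ sp := le_csSup hbddA hmS
  have hsq0 : sq ≤ 0 := csInf_le hbddB h0S
  have hgap : sp - sq ≤ R := by
    have h1 : dist (a + sp • e) (a + sq • e) ≤ R := hdist _ hspS _ hsqS
    have h2 : dist (a + sp • e) (a + sq • e) = |sp - sq| := by
      rw [dist_eq_norm]
      have : a + sp • e - (a + sq • e) = (sp - sq) • e := by
        rw [sub_smul]; abel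
      rw [this, norm_smul, he, mul_one, Real.norm_eq_abs]
    have h3 : |sp - sq| ≤ R := h2 ▸ h1
    linarith [(abs_le.mp h3).2]
  -- bound on b' side
  have hB : (inner ℝ (b' - b) e : ℝ) ≤ sp - m := by
    apply le_of_forall_pos_le_add
    intro ε hε
    have hpos : 0 < sp - m + ε := by linarith
    have hout : b + (sp - m + ε) • e ∉ closure Ω := by
      intro hcon
      have : sp + ε ∈ S := by
        have heq : a + (sp + ε) • e = b + (sp - m + ε) • e := by
          rw [hbe]; simp only [add_smul, sub_smul]; abel
        simpa [hSdef, heq] using hcon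
      have := le_csSup hbddA this
      linarith
    have := key_out_plus hmono hid he hb' hpos hout
    linarith
  -- bound on a' side
  have hA : (inner ℝ (a - a') e : ℝ) ≤ -sq := by
    apply le_of_forall_pos_le_add
    intro ε hε
    have hpos : 0 < -sq + ε := by linarith
    have hout : a - (-sq + ε) • e ∉ closure Ω := by
      intro hcon
      have : sq - ε ∈ S := by
        have heq : a + (sq - ε) • e = a - (-sq + ε) • e := by
          simp only [sub_smul, add_smul, neg_smul]; abel
        simpa [hSdef, heq] using hcon
      have := csInf_le hbddB this
      linarith
    have := key_out_minus hmono hid he ha' hpos hout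
    linarith
  have hbae : (inner ℝ (b - a) e : ℝ) = m := by
    rw [← hba, real_inner_smul_left, real_inner_self_eq_norm_sq, he]; ring
  have hsplit : (inner ℝ (b' - a') e : ℝ) =
      inner ℝ (b' - b) e + inner ℝ (b - a) e + inner ℝ (a - a') e := by
    rw [← inner_add_left, ← inner_add_left]
    congr 1
    abel
  have hmain : (inner ℝ (b' - a') e : ℝ) ≤ R := by
    rw [hsplit, hbae]; linarith
  have hfin : (inner ℝ (b' - a') (b - a) : ℝ) = m * inner ℝ (b' - a') e := by
    rw [← hba, real_inner_smul_right]
  rw [hfin]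
  nlinarith [hmain, hm]

/-- If `b ∈ closure Ω`, any element of `v b` exceeds `b` by at most `R` in any unit direction. -/
lemma dir_up_le {d : ℕ} {Ω : Set (EuclideanSpace ℝ (Fin d))}
    (hΩb : Bornology.IsBounded Ω)
    {v : EuclideanSpace ℝ (Fin d) → Set (EuclideanSpace ℝ (Fin d))}
    (hmono : MonotoneSetMap v) (hid : ∀ x ∉ closure Ω, v x = {x})
    {b b' e : EuclideanSpace ℝ (Fin d)} (he : ‖e‖ = 1)
    (hb : b ∈ closure Ω) (hb' : b' ∈ v b) :
    (inner ℝ (b' - b) e : ℝ) ≤ Metric.diam Ω := by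
  set R : ℝ := Metric.diam Ω with hRdef
  apply le_of_forall_pos_le_add
  intro ε hε
  have hR0 : 0 ≤ R := Metric.diam_nonneg
  have hpos : 0 < R + ε := by linarith
  have hout : b + (R + ε) • e ∉ closure Ω := by
    intro hcon
    have h1 : dist (b + (R + ε) • e) b ≤ Metric.diam (closure Ω) :=
      Metric.dist_le_diam_of_mem hΩb.closure hcon hb
    rw [Metric.diam_closure] at h1
    have h2 : dist (b + (R + ε) • e) b = R + ε := by
      rw [dist_eq_norm]
      have : b + (R + ε) • e - b = (R + ε) • e := by abel
      rw [this, norm_smul, he, mul_one, Real.norm_eq_abs, abs_of_pos hpos]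
    linarith [h2 ▸ h1]
  exact key_out_plus hmono hid he hb' hpos hout

lemma dir_dn_le {d : ℕ} {Ω : Set (EuclideanSpace ℝ (Fin d))}
    (hΩb : Bornology.IsBounded Ω)
    {v : EuclideanSpace ℝ (Fin d) → Set (EuclideanSpace ℝ (Fin d))}
    (hmono : MonotoneSetMap v) (hid : ∀ x ∉ closure Ω, v x = {x})
    {a a' e : EuclideanSpace ℝ (Fin d)} (he : ‖e‖ = 1)
    (ha : a ∈ closure Ω) (ha' : a' ∈ v a) :
    (inner ℝ (a - a') e : ℝ) ≤ Metric.diam Ω := by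
  have he' : ‖-e‖ = 1 := by rwa [norm_neg]
  have h := dir_up_le hΩb hmono hid he' ha ha'
  rw [inner_neg_right] at h
  have h2 : (inner ℝ (a - a') e : ℝ) = -inner ℝ (a' - a) e := by
    rw [← inner_neg_left]; congr 1; abel
  linarith [h, h2.le, h2.ge]

/-- Key bound for general `a, b`. -/
lemma inner_le_diam_add {d : ℕ} {Ω : Set (EuclideanSpace ℝ (Fin d))}
    (hΩb : Bornology.IsBounded Ω)
    {v : EuclideanSpace ℝ (Fin d) → Set (EuclideanSpace ℝ (Fin d))}
    (hmono : MonotoneSetMap v) (hid : ∀ x ∉ closure Ω, v x = {x})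
    {a b a' b' : EuclideanSpace ℝ (Fin d)} (ha' : a' ∈ v a) (hb' : b' ∈ v b) :
    (inner ℝ (b' - a') (b - a) : ℝ) ≤ (Metric.diam Ω + ‖b - a‖) * ‖b - a‖ := by
  rcases eq_or_ne b a with rfl | hne
  · simp
  have hm : (0:ℝ) < ‖b - a‖ := by
    rw [norm_pos_iff]; exact sub_ne_zero.mpr hne
  set m : ℝ := ‖b - a‖ with hmdef
  set R : ℝ := Metric.diam Ω with hRdef
  have hR0 : 0 ≤ R := Metric.diam_nonneg
  by_cases hacl : a ∈ closure Ω
  · by_cases hbcl : b ∈ closure Ω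
    · have := inner_le_diam hΩb hmono hid hacl hbcl ha' hb'
      nlinarith [this, hm]
    · -- a in, b out : b' = b
      have hb'' : b' = b := by
        have := hb'
        rw [hid _ hbcl] at this
        simpa using this
      set e : EuclideanSpace ℝ (Fin d) := (m : ℝ)⁻¹ • (b - a) with hedef
      have he : ‖e‖ = 1 := norm_smul_inv_norm (sub_ne_zero.mpr hne)
      have hba : m • e = b - a := by
        rw [hedef, smul_smul, mul_inv_cancel₀ hm.ne', one_smul]
      have hbae : (inner ℝ (b - a) e : ℝ) = m := by
        rw [← hba, real_inner_smul_left, real_inner_self_eq_norm_sq, he]; ring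
      have hA : (inner ℝ (a - a') e : ℝ) ≤ R := dir_dn_le hΩb hmono hid he hacl ha'
      have hsplit : (inner ℝ (b' - a') e : ℝ) =
          inner ℝ (b' - b) e + inner ℝ (b - a) e + inner ℝ (a - a') e := by
        rw [← inner_add_left, ← inner_add_left]; congr 1; abel
      have hBz : (inner ℝ (b' - b) e : ℝ) = 0 := by
        rw [hb'']; simp
      have hmain : (inner ℝ (b' - a') e : ℝ) ≤ R + m := by
        rw [hsplit, hbae, hBz]; linarith
      have hfin : (inner ℝ (b' - a') (b - a) : ℝ) = m * inner ℝ (b' - a') e := by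
        rw [← hba, real_inner_smul_right]
      rw [hfin]
      nlinarith [hmain, hm]
  · -- a out : a' = a
    have ha'' : a' = a := by
      have := ha'
      rw [hid _ hacl] at this
      simpa using this
    set e : EuclideanSpace ℝ (Fin d) := (m : ℝ)⁻¹ • (b - a) with hedef
    have he : ‖e‖ = 1 := norm_smul_inv_norm (sub_ne_zero.mpr hne)
    have hba : m • e = b - a := by
      rw [hedef, smul_smul, mul_inv_cancel₀ hm.ne', one_smul]
    have hbae : (inner ℝ (b - a) e : ℝ) = m := by
      rw [← hba, real_inner_smul_left, real_inner_self_eq_norm_sq, he]; ring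
    have hAz : (inner ℝ (a - a') e : ℝ) = 0 := by
      rw [ha'']; simp
    have hB : (inner ℝ (b' - b) e : ℝ) ≤ R := by
      by_cases hbcl : b ∈ closure Ω
      · exact dir_up_le hΩb hmono hid he hbcl hb'
      · have hb'' : b' = b := by
          have := hb'
          rw [hid _ hbcl] at this
          simpa using this
        rw [hb'']; simpa using hR0
    have hsplit : (inner ℝ (b' - a') e : ℝ) =
        inner ℝ (b' - b) e + inner ℝ (b - a) e + inner ℝ (a - a') e := by
      rw [← inner_add_left, ← inner_add_left]; congr 1; abel
    have hmain : (inner ℝ (b' - a') e : ℝ) ≤ R + m := by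
      rw [hsplit, hbae, hAz]; linarith
    have hfin : (inner ℝ (b' - a') (b - a) : ℝ) = m * inner ℝ (b' - a') e := by
      rw [← hba, real_inner_smul_right]
    rw [hfin]
    nlinarith [hmain, hm]

theorem stmt12 {d : ℕ} (Ω : Set (EuclideanSpace ℝ (Fin d)))
    (hΩo : IsOpen Ω) (hΩb : Bornology.IsBounded Ω) (hΩc : Convex ℝ Ω) (hΩne : Ω.Nonempty)
    (v : EuclideanSpace ℝ (Fin d) → Set (EuclideanSpace ℝ (Fin d)))
    (hv : MaxMonotone v) (hid : ∀ x ∉ closure Ω, v x = {x}) :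
    (∀ a ∈ closure Ω, ∀ b ∈ closure Ω,
      ellV v a b ≤ Real.sqrt (2 * Metric.diam Ω) * Real.sqrt ‖b - a‖) ∧
    (∀ a b : EuclideanSpace ℝ (Fin d),
      ellV v a b ≤ Real.sqrt 2 * Real.sqrt ‖b - a‖ * Real.sqrt (Metric.diam Ω + ‖b - a‖)) := by
  obtain ⟨hmono, hne, _⟩ := hv
  have hR0 : (0:ℝ) ≤ Metric.diam Ω := Metric.diam_nonneg
  constructor
  · intro a ha b hb
    obtain ⟨a', ha'⟩ := hne a
    obtain ⟨b', hb'⟩ := hne b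
    have h1 : ellV v a b ≤ Real.sqrt (2 * (inner ℝ (b' - a') (b - a) : ℝ)) :=
      ellV_le ha' hb'
    have h2 : (inner ℝ (b' - a') (b - a) : ℝ) ≤ Metric.diam Ω * ‖b - a‖ :=
      inner_le_diam hΩb hmono hid ha hb ha' hb'
    calc ellV v a b ≤ Real.sqrt (2 * (inner ℝ (b' - a') (b - a) : ℝ)) := h1
      _ ≤ Real.sqrt ((2 * Metric.diam Ω) * ‖b - a‖) := by
          apply Real.sqrt_le_sqrt; nlinarith
      _ = Real.sqrt (2 * Metric.diam Ω) * Real.sqrt ‖b - a‖ :=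
          Real.sqrt_mul (by linarith) _
  · intro a b
    obtain ⟨a', ha'⟩ := hne a
    obtain ⟨b', hb'⟩ := hne b
    have h1 : ellV v a b ≤ Real.sqrt (2 * (inner ℝ (b' - a') (b - a) : ℝ)) :=
      ellV_le ha' hb'
    have h2 : (inner ℝ (b' - a') (b - a) : ℝ) ≤ (Metric.diam Ω + ‖b - a‖) * ‖b - a‖ :=
      inner_le_diam_add hΩb hmono hid ha' hb'
    have hm0 : (0:ℝ) ≤ ‖b - a‖ := norm_nonneg _
    calc ellV v a b ≤ Real.sqrt (2 * (inner ℝ (b' - a') (b - a) : ℝ)) := h1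
      _ ≤ Real.sqrt ((2 * ‖b - a‖) * (Metric.diam Ω + ‖b - a‖)) := by
          apply Real.sqrt_le_sqrt; nlinarith
      _ = Real.sqrt (2 * ‖b - a‖) * Real.sqrt (Metric.diam Ω + ‖b - a‖) :=
          Real.sqrt_mul (by linarith) _
      _ = Real.sqrt 2 * Real.sqrt ‖b - a‖ * Real.sqrt (Metric.diam Ω + ‖b - a‖) := by
          rw [Real.sqrt_mul (by norm_num : (0:ℝ) ≤ 2)]
end

section
/- Let v be a maximal monotone map on ℝ^d equal to the identity outside a bounded convex set closure(Ω), and define the cost c_v(a,b) := inf over finite chains a = x₁, x₂, …, x_N = b of Σᵢ ℓ_v(xᵢ, x_{i+1}). Then c_v is symmetric, sub-additive (c_v(a,c) ≤ c_v(a,b) + c_v(b,c)), continuous on ℝ^d × ℝ^d, and satisfies √2·|d(a,Ω) − d(b,Ω)| ≤ c_v(a,b) ≤ ℓ_v(a,b) for all a,b. -/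
open Metric Finset

namespace Stmt13Aux

variable {d : ℕ} {Ω : Set (EuclideanSpace ℝ (Fin d))}
  {v : EuclideanSpace ℝ (Fin d) → Set (EuclideanSpace ℝ (Fin d))}

/-- inner swap helper -/
lemma inner_swap (p q r s : EuclideanSpace ℝ (Fin d)) :
    (inner ℝ (p - q) (r - s) : ℝ) = inner ℝ (q - p) (s - r) := by
  rw [← neg_sub q p, ← neg_sub s r, inner_neg_neg]

/-- Case C of the key inequality: `a` outside, `b` inside the closure. -/
lemma caseC (hmono : MonotoneSetMap v) (hid : ∀ x ∉ closure Ω, v x = {x})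
    {a b b' : EuclideanSpace ℝ (Fin d)} (ha : a ∉ closure Ω) (hb : b ∈ closure Ω)
    (hb' : b' ∈ v b) : (infDist a Ω) ^ 2 ≤ (inner ℝ (b' - a) (b - a) : ℝ) := by
  set X : ℝ := inner ℝ (b' - a) (b - a) with hX
  have haa : a ∈ v a := by rw [hid a ha]; rfl
  have hX0 : 0 ≤ X := hmono b a b' a hb' haa
  set S : Set ℝ := {t | t ∈ Set.Icc (0:ℝ) 1 ∧ a + t • (b - a) ∈ closure Ω} with hS
  have h1S : (1:ℝ) ∈ S := by
    refine ⟨by norm_num, ?_⟩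
    have : a + (1:ℝ) • (b - a) = b := by module
    rw [this]; exact hb
  have hScl : IsClosed S := by
    apply IsClosed.inter isClosed_Icc
    exact IsClosed.preimage (by continuity) isClosed_closure
  have hSbd : BddBelow S := ⟨0, fun t ht => ht.1.1⟩
  set t0 := sInf S with ht0def
  have ht0S : t0 ∈ S := hScl.csInf_mem ⟨1, h1S⟩ hSbd
  have ht0 : 0 ≤ t0 := ht0S.1.1
  have h1 : infDist a Ω ≤ t0 * ‖b - a‖ := by
    have h := infDist_le_dist_of_mem (x := a) ht0S.2
    rw [infDist_closure] at h
    calc infDist a Ω ≤ dist a (a + t0 • (b - a)) := h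
      _ = ‖t0 • (b - a)‖ := by
          rw [dist_eq_norm']
          congr 1
          module
      _ = t0 * ‖b - a‖ := by rw [norm_smul, Real.norm_eq_abs, abs_of_nonneg ht0]
  have h4 : infDist a Ω ≤ ‖b - a‖ := by
    have h := infDist_le_dist_of_mem (x := a) hb
    rw [infDist_closure] at h
    rwa [dist_eq_norm, norm_sub_rev] at h
  have h2 : ∀ t : ℝ, 0 ≤ t → t < t0 → t * ‖b - a‖ ^ 2 ≤ X := by
    intro t htn htl
    have ht1 : t < 1 := lt_of_lt_of_le htl ht0S.1.2
    have hp : a + t • (b - a) ∉ closure Ω := by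
      intro hmem
      exact absurd (csInf_le hSbd ⟨⟨htn, le_of_lt ht1⟩, hmem⟩) (not_le.mpr htl)
    have hpm : (a + t • (b - a)) ∈ v (a + t • (b - a)) := by rw [hid _ hp]; rfl
    have hm := hmono b (a + t • (b - a)) b' _ hb' hpm
    have e1 : b - (a + t • (b - a)) = (1 - t) • (b - a) := by module
    have e2 : b' - (a + t • (b - a)) = (b' - a) - t • (b - a) := by module
    rw [e1, e2, real_inner_smul_right, inner_sub_left, real_inner_smul_left,
      real_inner_self_eq_norm_sq] at hm
    nlinarith [hm, ht1]
  have h3 : t0 * ‖b - a‖ ^ 2 ≤ X := by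
    have ht0pos : 0 < t0 := by
      rcases eq_or_lt_of_le ht0 with h | h
      · exfalso; apply ha
        have := ht0S.2
        rw [← h] at this
        simpa using this
      · exact h
    by_contra hXc
    push_neg at hXc
    have hc : 0 < ‖b - a‖ ^ 2 := by
      rcases lt_or_eq_of_le (sq_nonneg ‖b - a‖) with h | h
      · exact h
      · exfalso; rw [← h] at hXc; simp at hXc; linarith
    obtain ⟨t, htl, htr⟩ := exists_between ((div_lt_iff₀ hc).mpr hXc)
    have htn : 0 ≤ t := le_trans (div_nonneg hX0 hc.le) htl.le
    have := h2 t htn htr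
    have := (div_lt_iff₀ hc).mp htl
    linarith
  nlinarith [infDist_nonneg (s := Ω) (x := a), h1, h4, h3]

/-- Key inequality. -/
lemma key (hmono : MonotoneSetMap v) (hid : ∀ x ∉ closure Ω, v x = {x})
    {a b a' b' : EuclideanSpace ℝ (Fin d)} (ha' : a' ∈ v a) (hb' : b' ∈ v b) :
    (infDist b Ω - infDist a Ω) ^ 2 ≤ (inner ℝ (b' - a') (b - a) : ℝ) := by
  have hd0 : ∀ x : EuclideanSpace ℝ (Fin d), x ∈ closure Ω → infDist x Ω = 0 := by
    intro x hx
    rw [← infDist_closure]; exact infDist_zero_of_mem hx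
  by_cases ha : a ∈ closure Ω <;> by_cases hb : b ∈ closure Ω
  · rw [hd0 a ha, hd0 b hb]
    simpa using hmono b a b' a' hb' ha'
  · -- a inside, b outside
    have hbb : b' = b := by rw [hid b hb] at hb'; exact hb'
    rw [hd0 a ha, hbb, inner_swap]
    have := caseC hmono hid hb ha ha'
    calc (infDist b Ω - 0) ^ 2 = (infDist b Ω) ^ 2 := by ring
      _ ≤ _ := this
  · -- a outside, b inside
    have haa : a' = a := by rw [hid a ha] at ha'; exact ha'
    rw [hd0 b hb, haa]
    have := caseC hmono hid ha hb hb'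
    calc (0 - infDist a Ω) ^ 2 = (infDist a Ω) ^ 2 := by ring
      _ ≤ _ := this
  · have haa : a' = a := by rw [hid a ha] at ha'; exact ha'
    have hbb : b' = b := by rw [hid b hb] at hb'; exact hb'
    rw [haa, hbb, real_inner_self_eq_norm_sq]
    have lip : |infDist b Ω - infDist a Ω| ≤ dist b a := by
      rw [abs_sub_le_iff]
      constructor
      · linarith [infDist_le_infDist_add_dist (s := Ω) (x := b) (y := a)]
      · linarith [infDist_le_infDist_add_dist (s := Ω) (x := a) (y := b),
          dist_comm b a]
    have := abs_le.mp lip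
    rw [dist_eq_norm] at this
    nlinarith [this.1, this.2, sq_nonneg ‖b - a‖]

/-- boundedness of v. -/
lemma vbound {R : ℝ} (hR : closure Ω ⊆ closedBall 0 R) (hR0 : 0 ≤ R)
    (hmono : MonotoneSetMap v) (hid : ∀ x ∉ closure Ω, v x = {x})
    {x x' : EuclideanSpace ℝ (Fin d)} (hx' : x' ∈ v x) : ‖x' - x‖ ≤ 2 * R := by
  by_cases hx : x ∈ closure Ω
  · rcases eq_or_ne x' x with h | h
    · rw [h]; simpa using (by linarith : (0:ℝ) ≤ 2 * R)
    · have hne : x' - x ≠ 0 := sub_ne_zero.mpr h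
      have hnn : (0:ℝ) < ‖x' - x‖ := norm_pos_iff.mpr hne
      set u : EuclideanSpace ℝ (Fin d) := (‖x' - x‖)⁻¹ • (x' - x) with hu
      have hu1 : ‖u‖ = 1 := norm_smul_inv_norm hne
      have hval : (inner ℝ (x' - x) u : ℝ) = ‖x' - x‖ := by
        rw [hu, real_inner_smul_right, real_inner_self_eq_norm_sq]
        field_simp
      have hstep : ∀ t : ℝ, 2 * R < t → (inner ℝ (x' - x) u : ℝ) ≤ t := by
        intro t ht
        have htpos : 0 < t := lt_of_le_of_lt (by linarith) ht
        have hxR : ‖x‖ ≤ R := by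
          have := hR hx
          rwa [mem_closedBall, dist_zero_right] at this
        have hxt : x + t • u ∉ closure Ω := by
          intro hmem
          have h1 : ‖x + t • u‖ ≤ R := by
            have := hR hmem
            rwa [mem_closedBall, dist_zero_right] at this
          have h2 : ‖t • u‖ ≤ ‖x + t • u‖ + ‖x‖ := by
            have h2' : ‖(x + t • u) - x‖ ≤ ‖x + t • u‖ + ‖x‖ := norm_sub_le _ _
            have e : (x + t • u) - x = t • u := by module
            rwa [e] at h2'
          rw [norm_smul, Real.norm_eq_abs, abs_of_pos htpos, hu1, mul_one] at h2
          linarith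
        have hpm : x + t • u ∈ v (x + t • u) := by rw [hid _ hxt]; rfl
        have hm := hmono (x + t • u) x (x + t • u) x' hpm hx'
        have e1 : (x + t • u) - x = t • u := by module
        have e2 : (x + t • u) - x' = t • u - (x' - x) := by module
        rw [e1, e2, real_inner_smul_right, inner_sub_left, real_inner_smul_left,
          real_inner_self_eq_norm_sq, hu1] at hm
        nlinarith [hm]
      by_contra hcon
      push_neg at hcon
      rw [← hval] at hcon
      obtain ⟨t, h1t, h2t⟩ := exists_between hcon
      exact absurd (hstep t (by linarith)) (not_le.mpr h2t)
  · rw [hid x hx] at hx'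
    rw [Set.mem_singleton_iff] at hx'
    rw [hx']
    simpa using (by linarith : (0:ℝ) ≤ 2 * R)

section EllCost

variable (hv : MaxMonotone v) (hid : ∀ x ∉ closure Ω, v x = {x})

/-- membership in the ell set -/
lemma mem_ellSet {a b a' b' : EuclideanSpace ℝ (Fin d)} (ha' : a' ∈ v a) (hb' : b' ∈ v b) :
    Real.sqrt (2 * (inner ℝ (b' - a') (b - a) : ℝ)) ∈
      {r : ℝ | ∃ a' ∈ v a, ∃ b' ∈ v b, r = Real.sqrt (2 * (inner ℝ (b' - a') (b - a) : ℝ))} :=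
  ⟨a', ha', b', hb', rfl⟩

include hv in
lemma ellSet_nonempty (a b : EuclideanSpace ℝ (Fin d)) :
    {r : ℝ | ∃ a' ∈ v a, ∃ b' ∈ v b, r = Real.sqrt (2 * (inner ℝ (b' - a') (b - a) : ℝ))}.Nonempty := by
  obtain ⟨a', ha'⟩ := hv.2.1 a
  obtain ⟨b', hb'⟩ := hv.2.1 b
  exact ⟨_, mem_ellSet ha' hb'⟩

lemma ellSet_bdd (a b : EuclideanSpace ℝ (Fin d)) :
    BddBelow {r : ℝ | ∃ a' ∈ v a, ∃ b' ∈ v b, r = Real.sqrt (2 * (inner ℝ (b' - a') (b - a) : ℝ))} := by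
  refine ⟨0, fun r hr => ?_⟩
  obtain ⟨a', _, b', _, rfl⟩ := hr
  exact Real.sqrt_nonneg _

include hv in
lemma ell_nonneg (a b : EuclideanSpace ℝ (Fin d)) : 0 ≤ ellV v a b := by
  refine le_csInf (ellSet_nonempty hv a b) (fun r hr => ?_)
  obtain ⟨a', _, b', _, rfl⟩ := hr
  exact Real.sqrt_nonneg _

include hv hid in
lemma ell_lower (a b : EuclideanSpace ℝ (Fin d)) :
    Real.sqrt 2 * |infDist a Ω - infDist b Ω| ≤ ellV v a b := by
  refine le_csInf (ellSet_nonempty hv a b) (fun r hr => ?_)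
  obtain ⟨a', ha', b', hb', rfl⟩ := hr
  have hk := key hv.1 hid ha' hb'
  calc Real.sqrt 2 * |infDist a Ω - infDist b Ω|
      = Real.sqrt 2 * Real.sqrt ((infDist b Ω - infDist a Ω) ^ 2) := by
        rw [Real.sqrt_sq_eq_abs, abs_sub_comm]
    _ = Real.sqrt (2 * (infDist b Ω - infDist a Ω) ^ 2) := by
        rw [Real.sqrt_mul (by norm_num : (0:ℝ) ≤ 2)]
    _ ≤ Real.sqrt (2 * (inner ℝ (b' - a') (b - a) : ℝ)) := by
        apply Real.sqrt_le_sqrt; nlinarith [hk]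

lemma ell_symm (a b : EuclideanSpace ℝ (Fin d)) : ellV v a b = ellV v b a := by
  unfold ellV
  congr 1
  ext r
  constructor
  · rintro ⟨a', ha', b', hb', rfl⟩
    exact ⟨b', hb', a', ha', by rw [inner_swap]⟩
  · rintro ⟨b', hb', a', ha', rfl⟩
    exact ⟨a', ha', b', hb', by rw [inner_swap]⟩

include hv hid in
lemma ell_upper {R : ℝ} (hR : closure Ω ⊆ closedBall 0 R) (hR0 : 0 ≤ R)
    (a b : EuclideanSpace ℝ (Fin d)) :
    ellV v a b ≤ Real.sqrt (2 * ((dist a b + 4 * R) * dist a b)) := by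
  obtain ⟨a', ha'⟩ := hv.2.1 a
  obtain ⟨b', hb'⟩ := hv.2.1 b
  refine le_trans (csInf_le (ellSet_bdd a b) (mem_ellSet ha' hb')) ?_
  apply Real.sqrt_le_sqrt
  have h1 : (inner ℝ (b' - a') (b - a) : ℝ) ≤ ‖b' - a'‖ * ‖b - a‖ := real_inner_le_norm _ _
  have h2 : ‖b' - a'‖ ≤ ‖b - a‖ + 4 * R := by
    have e : b' - a' = (b' - b) + (b - a) + (a - a') := by module
    have hb2 : ‖b' - b‖ ≤ 2 * R := vbound hR hR0 hv.1 hid hb'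
    have ha2 : ‖a - a'‖ ≤ 2 * R := by
      rw [norm_sub_rev]; exact vbound hR hR0 hv.1 hid ha'
    calc ‖b' - a'‖ = ‖(b' - b) + (b - a) + (a - a')‖ := by rw [← e]
      _ ≤ ‖(b' - b) + (b - a)‖ + ‖a - a'‖ := norm_add_le _ _
      _ ≤ ‖b' - b‖ + ‖b - a‖ + ‖a - a'‖ := by linarith [norm_add_le (b' - b) (b - a)]
      _ ≤ ‖b - a‖ + 4 * R := by linarith
  rw [dist_eq_norm, norm_sub_rev]
  nlinarith [norm_nonneg (b - a), h1, h2]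

/-- the cost set -/
lemma mem_costSet_ell (a b : EuclideanSpace ℝ (Fin d)) :
    ellV v a b ∈ {r : ℝ | ∃ (N : ℕ) (x : ℕ → EuclideanSpace ℝ (Fin d)), 0 < N ∧ x 0 = a ∧
      x N = b ∧ r = ∑ i ∈ Finset.range N, ellV v (x i) (x (i+1))} := by
  refine ⟨1, fun i => if i = 0 then a else b, one_pos, by simp, by simp, ?_⟩
  simp [Finset.sum_range_one]

include hv hid in
lemma costSet_lower (a b : EuclideanSpace ℝ (Fin d)) {r : ℝ}
    (hr : r ∈ {r : ℝ | ∃ (N : ℕ) (x : ℕ → EuclideanSpace ℝ (Fin d)), 0 < N ∧ x 0 = a ∧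
      x N = b ∧ r = ∑ i ∈ Finset.range N, ellV v (x i) (x (i+1))}) :
    Real.sqrt 2 * |infDist a Ω - infDist b Ω| ≤ r := by
  obtain ⟨N, x, hN, hx0, hxN, rfl⟩ := hr
  have step : ∀ i ∈ Finset.range N,
      Real.sqrt 2 * |infDist (x i) Ω - infDist (x (i+1)) Ω| ≤ ellV v (x i) (x (i+1)) :=
    fun i _ => ell_lower hv hid _ _
  calc Real.sqrt 2 * |infDist a Ω - infDist b Ω|
      = Real.sqrt 2 * |∑ i ∈ Finset.range N, (infDist (x (i+1)) Ω - infDist (x i) Ω)| := by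
        rw [Finset.sum_range_sub (fun i => infDist (x i) Ω) N, hx0, hxN, abs_sub_comm]
    _ ≤ Real.sqrt 2 * ∑ i ∈ Finset.range N, |infDist (x (i+1)) Ω - infDist (x i) Ω| := by
        apply mul_le_mul_of_nonneg_left (Finset.abs_sum_le_sum_abs _ _) (Real.sqrt_nonneg 2)
    _ = ∑ i ∈ Finset.range N, Real.sqrt 2 * |infDist (x i) Ω - infDist (x (i+1)) Ω| := by
        rw [Finset.mul_sum]
        exact Finset.sum_congr rfl fun i _ => by rw [abs_sub_comm]
    _ ≤ ∑ i ∈ Finset.range N, ellV v (x i) (x (i+1)) := Finset.sum_le_sum step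

include hv hid in
lemma costSet_bdd (a b : EuclideanSpace ℝ (Fin d)) :
    BddBelow {r : ℝ | ∃ (N : ℕ) (x : ℕ → EuclideanSpace ℝ (Fin d)), 0 < N ∧ x 0 = a ∧
      x N = b ∧ r = ∑ i ∈ Finset.range N, ellV v (x i) (x (i+1))} :=
  ⟨_, fun r hr => costSet_lower hv hid a b hr⟩

include hv hid in
lemma cost_lower (a b : EuclideanSpace ℝ (Fin d)) :
    Real.sqrt 2 * |infDist a Ω - infDist b Ω| ≤ costV v a b :=
  le_csInf ⟨_, mem_costSet_ell a b⟩ (fun r hr => costSet_lower hv hid a b hr)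

include hv hid in
lemma cost_le_ell (a b : EuclideanSpace ℝ (Fin d)) : costV v a b ≤ ellV v a b :=
  csInf_le (costSet_bdd hv hid a b) (mem_costSet_ell a b)

def costSet (v : EuclideanSpace ℝ (Fin d) → Set (EuclideanSpace ℝ (Fin d)))
    (a b : EuclideanSpace ℝ (Fin d)) : Set ℝ :=
  {r : ℝ | ∃ (N : ℕ) (x : ℕ → EuclideanSpace ℝ (Fin d)), 0 < N ∧ x 0 = a ∧ x N = b ∧
    r = ∑ i ∈ Finset.range N, ellV v (x i) (x (i+1))}

lemma costV_eq (a b : EuclideanSpace ℝ (Fin d)) : costV v a b = sInf (costSet v a b) := rfl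

lemma costSet_rev (a b : EuclideanSpace ℝ (Fin d)) : costSet v a b ⊆ costSet v b a := by
  rintro r ⟨N, x, hN, hx0, hxN, rfl⟩
  refine ⟨N, fun i => x (N - i), hN, by simpa using hxN, by simpa using hx0, ?_⟩
  have hcg : ∀ j ∈ Finset.range N,
      ellV v (x (N - j)) (x (N - (j+1))) =
        (fun j => ellV v (x j) (x (j+1))) (N - 1 - j) := by
    intro j hj
    rw [Finset.mem_range] at hj
    simp only []
    rw [show N - 1 - j + 1 = N - j from by omega, show N - (j+1) = N - 1 - j from by omega,
      ell_symm]
  rw [Finset.sum_congr rfl hcg]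
  exact (Finset.sum_range_reflect (fun j => ellV v (x j) (x (j + 1))) N).symm

include hv hid in
lemma cost_symm (a b : EuclideanSpace ℝ (Fin d)) : costV v a b = costV v b a := by
  rw [costV_eq, costV_eq, Set.Subset.antisymm (costSet_rev a b) (costSet_rev b a)]

lemma costSet_add {a b c : EuclideanSpace ℝ (Fin d)} {r s : ℝ}
    (hr : r ∈ costSet v a b) (hs : s ∈ costSet v b c) : r + s ∈ costSet v a c := by
  obtain ⟨N₁, x, hN₁, hx0, hxN, rfl⟩ := hr
  obtain ⟨N₂, y, hN₂, hy0, hyN, rfl⟩ := hs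
  refine ⟨N₁ + N₂, fun i => if i ≤ N₁ then x i else y (i - N₁), by omega,
    by simp [hx0], ?_, ?_⟩
  · simp only []
    rw [if_neg (by omega), show N₁ + N₂ - N₁ = N₂ from by omega, hyN]
  · rw [Finset.sum_range_add]
    congr 1
    · apply Finset.sum_congr rfl
      intro i hi
      rw [Finset.mem_range] at hi
      simp only []
      rw [if_pos (by omega : i ≤ N₁), if_pos (by omega : i + 1 ≤ N₁)]
    · apply Finset.sum_congr rfl
      intro i hi
      rw [Finset.mem_range] at hi
      simp only []
      have hz2 : (if N₁ + i + 1 ≤ N₁ then x (N₁ + i + 1) else y (N₁ + i + 1 - N₁)) = y (i+1) := by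
        rw [if_neg (by omega), show N₁ + i + 1 - N₁ = i + 1 from by omega]
      have hz1 : (if N₁ + i ≤ N₁ then x (N₁ + i) else y (N₁ + i - N₁)) = y i := by
        rcases Nat.eq_zero_or_pos i with h | h
        · subst h
          rw [if_pos (by omega)]
          rw [show N₁ + 0 = N₁ from by omega, hxN, hy0]
        · rw [if_neg (by omega), show N₁ + i - N₁ = i from by omega]
      rw [hz1, hz2]

include hv hid in
lemma cost_triangle (a b c : EuclideanSpace ℝ (Fin d)) :
    costV v a c ≤ costV v a b + costV v b c := by
  have H : ∀ s ∈ costSet v b c, costV v a c ≤ costV v a b + s := by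
    intro s hs
    have h1 : costV v a c - s ≤ costV v a b := by
      rw [costV_eq a b]
      refine le_csInf ⟨_, mem_costSet_ell a b⟩ (fun r hr => ?_)
      have h2 : costV v a c ≤ r + s := csInf_le (costSet_bdd hv hid a c) (costSet_add hr hs)
      linarith
    linarith
  have h2 : costV v a c - costV v a b ≤ costV v b c := by
    rw [costV_eq b c]
    exact le_csInf ⟨_, mem_costSet_ell b c⟩ (fun s hs => by linarith [H s hs])
  linarith

include hv hid in
lemma cost_diff (a b a₀ b₀ : EuclideanSpace ℝ (Fin d)) :
    |costV v a b - costV v a₀ b₀| ≤ costV v a a₀ + costV v b b₀ := by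
  rw [abs_sub_le_iff]
  constructor
  · have t1 := cost_triangle hv hid a a₀ b
    have t2 := cost_triangle hv hid a₀ b₀ b
    have s1 := cost_symm hv hid b₀ b
    linarith
  · have t1 := cost_triangle hv hid a₀ a b₀
    have t2 := cost_triangle hv hid a b b₀
    have s1 := cost_symm hv hid a₀ a
    linarith

end EllCost

end Stmt13Aux
theorem stmt13 {d : ℕ} (Ω : Set (EuclideanSpace ℝ (Fin d)))
    (hΩo : IsOpen Ω) (hΩb : Bornology.IsBounded Ω) (hΩc : Convex ℝ Ω) (hΩne : Ω.Nonempty)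
    (v : EuclideanSpace ℝ (Fin d) → Set (EuclideanSpace ℝ (Fin d)))
    (hv : MaxMonotone v) (hid : ∀ x ∉ closure Ω, v x = {x}) :
    (∀ a b, costV v a b = costV v b a) ∧
    (∀ a b c, costV v a c ≤ costV v a b + costV v b c) ∧
    Continuous (fun p : EuclideanSpace ℝ (Fin d) × EuclideanSpace ℝ (Fin d) =>
      costV v p.1 p.2) ∧
    (∀ a b, Real.sqrt 2 * |Metric.infDist a Ω - Metric.infDist b Ω| ≤ costV v a b ∧
      costV v a b ≤ ellV v a b) := by
  obtain ⟨R₀, hR₀⟩ := hΩb.closure.subset_closedBall 0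
  set R := max R₀ 0 with hRdef
  have hR : closure Ω ⊆ Metric.closedBall 0 R :=
    hR₀.trans (Metric.closedBall_subset_closedBall (le_max_left _ _))
  have hR0 : (0:ℝ) ≤ R := le_max_right _ _
  refine ⟨fun a b => Stmt13Aux.cost_symm hv hid a b,
    fun a b c => Stmt13Aux.cost_triangle hv hid a b c, ?_, fun a b =>
    ⟨Stmt13Aux.cost_lower hv hid a b, Stmt13Aux.cost_le_ell hv hid a b⟩⟩
  rw [Metric.continuous_iff]
  rintro ⟨a₀, b₀⟩ ε hε
  have hden : (0:ℝ) < 2*(1+4*R) := by linarith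
  set δ := min 1 ((ε/3)^2 / (2*(1+4*R))) with hδdef
  have hδpos : 0 < δ :=
    lt_min one_pos (div_pos (pow_pos (by linarith : (0:ℝ) < ε/3) 2) hden)
  refine ⟨δ, hδpos, ?_⟩
  rintro ⟨a, b⟩ hab
  rw [Prod.dist_eq, sup_lt_iff] at hab
  have keysmall : ∀ x y : EuclideanSpace ℝ (Fin d), dist x y < δ → costV v x y ≤ ε/3 := by
    intro x y hxy
    have h1 := Stmt13Aux.cost_le_ell hv hid x y
    have h2 := Stmt13Aux.ell_upper hv hid hR hR0 x y
    have hd0 : 0 ≤ dist x y := dist_nonneg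
    have hδ1 : δ ≤ 1 := min_le_left _ _
    have hδ2 : 2*(1+4*R)*δ ≤ (ε/3)^2 := by
      have h := min_le_right 1 ((ε/3)^2 / (2*(1+4*R)))
      rw [le_div_iff₀ hden] at h
      rw [hδdef]
      linarith [h]
    have c1 : 2*((dist x y + 4*R)*dist x y) ≤ 2*((δ+4*R)*δ) := by nlinarith
    have c2 : 2*((δ+4*R)*δ) ≤ 2*(1+4*R)*δ := by nlinarith
    have h4 : Real.sqrt (2*((dist x y + 4*R)*dist x y)) ≤ ε/3 := by
      calc Real.sqrt (2*((dist x y + 4*R)*dist x y)) ≤ Real.sqrt ((ε/3)^2) :=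
            Real.sqrt_le_sqrt (by linarith)
        _ = ε/3 := Real.sqrt_sq (by linarith : (0:ℝ) ≤ ε/3)
    linarith
  have hda := keysmall a a₀ hab.1
  have hdb := keysmall b b₀ hab.2
  rw [Real.dist_eq]
  calc |costV v a b - costV v a₀ b₀| ≤ costV v a a₀ + costV v b b₀ :=
        Stmt13Aux.cost_diff hv hid a b a₀ b₀
    _ ≤ ε/3 + ε/3 := add_le_add hda hdb
    _ < ε := by linarith
end

section
/- Let v₁, v₂ be maximal monotone maps on ℝ^d equal to the identity outside closure(Ω), and let v = (v₁ + v₂)/2 (the Minkowski average of the set-valued maps). Then for all x, y ∈ ℝ^d: ℓ_v(x,y)² ≥ (1/2)(ℓ_{v₁}(x,y)² + ℓ_{v₂}(x,y)²). Consequently, the map v ↦ c_v(a,b) is concave on the convex set of such maximal monotone maps. -/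
section Aux

variable {d : ℕ}

lemma ell_set_nonneg (v : EuclideanSpace ℝ (Fin d) → Set (EuclideanSpace ℝ (Fin d)))
    (a b : EuclideanSpace ℝ (Fin d)) :
    ∀ r ∈ {r : ℝ | ∃ a' ∈ v a, ∃ b' ∈ v b,
        r = Real.sqrt (2 * (inner ℝ (b' - a') (b - a) : ℝ))}, 0 ≤ r := by
  rintro r ⟨a', _, b', _, rfl⟩
  exact Real.sqrt_nonneg _

lemma ell_bddBelow (v : EuclideanSpace ℝ (Fin d) → Set (EuclideanSpace ℝ (Fin d)))
    (a b : EuclideanSpace ℝ (Fin d)) :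
    BddBelow {r : ℝ | ∃ a' ∈ v a, ∃ b' ∈ v b,
        r = Real.sqrt (2 * (inner ℝ (b' - a') (b - a) : ℝ))} :=
  ⟨0, fun r hr => ell_set_nonneg v a b r hr⟩

lemma ell_nonneg (v : EuclideanSpace ℝ (Fin d) → Set (EuclideanSpace ℝ (Fin d)))
    (a b : EuclideanSpace ℝ (Fin d)) : 0 ≤ ellV v a b :=
  Real.sInf_nonneg (ell_set_nonneg v a b)

lemma ell_le (v : EuclideanSpace ℝ (Fin d) → Set (EuclideanSpace ℝ (Fin d)))
    {a b a' b' : EuclideanSpace ℝ (Fin d)} (ha : a' ∈ v a) (hb : b' ∈ v b) :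
    ellV v a b ≤ Real.sqrt (2 * (inner ℝ (b' - a') (b - a) : ℝ)) :=
  csInf_le (ell_bddBelow v a b) ⟨a', ha, b', hb, rfl⟩

lemma key_ell (v₁ v₂ : EuclideanSpace ℝ (Fin d) → Set (EuclideanSpace ℝ (Fin d)))
    (hm₁ : MonotoneSetMap v₁) (hm₂ : MonotoneSetMap v₂)
    (hne₁ : ∀ x, (v₁ x).Nonempty) (hne₂ : ∀ x, (v₂ x).Nonempty)
    (x y : EuclideanSpace ℝ (Fin d)) :
    (1/2) * ((ellV v₁ x y)^2 + (ellV v₂ x y)^2) ≤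
      (ellV (fun x => {z | ∃ p ∈ v₁ x, ∃ q ∈ v₂ x, z = (1/2 : ℝ) • (p + q)}) x y)^2 := by
  set V : EuclideanSpace ℝ (Fin d) → Set (EuclideanSpace ℝ (Fin d)) :=
    fun x => {z | ∃ p ∈ v₁ x, ∃ q ∈ v₂ x, z = (1/2 : ℝ) • (p + q)} with hV
  have h₁0 : 0 ≤ ellV v₁ x y := ell_nonneg _ _ _
  have h₂0 : 0 ≤ ellV v₂ x y := ell_nonneg _ _ _
  set c : ℝ := (1/2) * ((ellV v₁ x y)^2 + (ellV v₂ x y)^2) with hc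
  have hc0 : 0 ≤ c := by positivity
  have hSne : {r : ℝ | ∃ a' ∈ V x, ∃ b' ∈ V y,
      r = Real.sqrt (2 * (inner ℝ (b' - a') (y - x) : ℝ))}.Nonempty := by
    obtain ⟨p, hp⟩ := hne₁ x
    obtain ⟨q, hq⟩ := hne₂ x
    obtain ⟨p', hp'⟩ := hne₁ y
    obtain ⟨q', hq'⟩ := hne₂ y
    exact ⟨_, ⟨(1/2 : ℝ) • (p + q), ⟨p, hp, q, hq, rfl⟩,
      (1/2 : ℝ) • (p' + q'), ⟨p', hp', q', hq', rfl⟩, rfl⟩⟩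
  have hbound : ∀ r ∈ {r : ℝ | ∃ a' ∈ V x, ∃ b' ∈ V y,
      r = Real.sqrt (2 * (inner ℝ (b' - a') (y - x) : ℝ))}, Real.sqrt c ≤ r := by
    rintro r ⟨a', ha', b', hb', rfl⟩
    obtain ⟨p, hp, q, hq, rfl⟩ := ha'
    obtain ⟨p', hp', q', hq', rfl⟩ := hb'
    have ht₁ : 0 ≤ (inner ℝ (p' - p) (y - x) : ℝ) := hm₁ y x p' p hp' hp
    have ht₂ : 0 ≤ (inner ℝ (q' - q) (y - x) : ℝ) := hm₂ y x q' q hq' hq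
    have hℓ₁ : (ellV v₁ x y)^2 ≤ 2 * (inner ℝ (p' - p) (y - x) : ℝ) := by
      calc (ellV v₁ x y)^2 ≤ (Real.sqrt (2 * (inner ℝ (p' - p) (y - x) : ℝ)))^2 :=
            pow_le_pow_left₀ h₁0 (ell_le v₁ hp hp') 2
        _ = 2 * (inner ℝ (p' - p) (y - x) : ℝ) := Real.sq_sqrt (by linarith)
    have hℓ₂ : (ellV v₂ x y)^2 ≤ 2 * (inner ℝ (q' - q) (y - x) : ℝ) := by
      calc (ellV v₂ x y)^2 ≤ (Real.sqrt (2 * (inner ℝ (q' - q) (y - x) : ℝ)))^2 :=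
            pow_le_pow_left₀ h₂0 (ell_le v₂ hq hq') 2
        _ = 2 * (inner ℝ (q' - q) (y - x) : ℝ) := Real.sq_sqrt (by linarith)
    have hin : (inner ℝ ((1/2 : ℝ) • (p' + q') - (1/2 : ℝ) • (p + q)) (y - x) : ℝ)
        = (1/2) * ((inner ℝ (p' - p) (y - x) : ℝ) + (inner ℝ (q' - q) (y - x) : ℝ)) := by
      have hvec : (1/2 : ℝ) • (p' + q') - (1/2 : ℝ) • (p + q)
          = (1/2 : ℝ) • ((p' - p) + (q' - q)) := by module
      rw [hvec, real_inner_smul_left, inner_add_left]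
    apply Real.sqrt_le_sqrt
    rw [hin]
    rw [hc]
    linarith
  have hfin : Real.sqrt c ≤ ellV V x y := le_csInf hSne hbound
  calc c = (Real.sqrt c)^2 := (Real.sq_sqrt hc0).symm
    _ ≤ (ellV V x y)^2 := pow_le_pow_left₀ (Real.sqrt_nonneg c) hfin 2

end Aux

theorem stmt15 {d : ℕ} (Ω : Set (EuclideanSpace ℝ (Fin d)))
    (hΩo : IsOpen Ω) (hΩb : Bornology.IsBounded Ω) (hΩc : Convex ℝ Ω) (hΩne : Ω.Nonempty)
    (v₁ v₂ : EuclideanSpace ℝ (Fin d) → Set (EuclideanSpace ℝ (Fin d)))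
    (hv₁ : MaxMonotone v₁) (hv₂ : MaxMonotone v₂)
    (hid₁ : ∀ x ∉ closure Ω, v₁ x = {x}) (hid₂ : ∀ x ∉ closure Ω, v₂ x = {x})
    (v : EuclideanSpace ℝ (Fin d) → Set (EuclideanSpace ℝ (Fin d)))
    (hv : v = fun x => {z | ∃ p ∈ v₁ x, ∃ q ∈ v₂ x, z = (1/2 : ℝ) • (p + q)}) :
    (∀ x y : EuclideanSpace ℝ (Fin d),
      (1/2) * ((ellV v₁ x y)^2 + (ellV v₂ x y)^2) ≤ (ellV v x y)^2) ∧
    (∀ a b : EuclideanSpace ℝ (Fin d),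
      (1/2) * (costV v₁ a b + costV v₂ a b) ≤ costV v a b) := by
  obtain ⟨hm₁, hne₁, -⟩ := hv₁
  obtain ⟨hm₂, hne₂, -⟩ := hv₂
  have key : ∀ x y : EuclideanSpace ℝ (Fin d),
      (1/2) * ((ellV v₁ x y)^2 + (ellV v₂ x y)^2) ≤ (ellV v x y)^2 := by
    intro x y
    rw [hv]
    exact key_ell v₁ v₂ hm₁ hm₂ hne₁ hne₂ x y
  refine ⟨key, ?_⟩
  -- pointwise: ellV v ≥ (ℓ₁ + ℓ₂)/2
  have keyL : ∀ x y : EuclideanSpace ℝ (Fin d),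
      (1/2) * (ellV v₁ x y + ellV v₂ x y) ≤ ellV v x y := by
    intro x y
    have h₁ := ell_nonneg v₁ x y
    have h₂ := ell_nonneg v₂ x y
    have h₃ := ell_nonneg v x y
    have hk := key x y
    nlinarith [sq_nonneg (ellV v₁ x y - ellV v₂ x y),
      sq_nonneg (ellV v₁ x y + ellV v₂ x y), sq_nonneg (ellV v x y)]
  intro a b
  have hbddC : ∀ w : EuclideanSpace ℝ (Fin d) → Set (EuclideanSpace ℝ (Fin d)),
      BddBelow {r : ℝ | ∃ (N : ℕ) (x : ℕ → EuclideanSpace ℝ (Fin d)),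
        0 < N ∧ x 0 = a ∧ x N = b ∧
        r = ∑ i ∈ Finset.range N, ellV w (x i) (x (i+1))} := by
    intro w
    refine ⟨0, ?_⟩
    rintro r ⟨N, x, -, -, -, rfl⟩
    exact Finset.sum_nonneg fun i _ => ell_nonneg w _ _
  have hCne : {r : ℝ | ∃ (N : ℕ) (x : ℕ → EuclideanSpace ℝ (Fin d)),
      0 < N ∧ x 0 = a ∧ x N = b ∧
      r = ∑ i ∈ Finset.range N, ellV v (x i) (x (i+1))}.Nonempty := by
    refine ⟨ellV v a b, 1, fun i => if i = 0 then a else b, one_pos, rfl, rfl, ?_⟩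
    simp
  apply le_csInf hCne
  rintro r ⟨N, x, hN, hx0, hxN, rfl⟩
  have hc₁ : costV v₁ a b ≤ ∑ i ∈ Finset.range N, ellV v₁ (x i) (x (i+1)) :=
    csInf_le (hbddC v₁) ⟨N, x, hN, hx0, hxN, rfl⟩
  have hc₂ : costV v₂ a b ≤ ∑ i ∈ Finset.range N, ellV v₂ (x i) (x (i+1)) :=
    csInf_le (hbddC v₂) ⟨N, x, hN, hx0, hxN, rfl⟩
  have hsum : ∑ i ∈ Finset.range N, (1/2) * (ellV v₁ (x i) (x (i+1)) + ellV v₂ (x i) (x (i+1)))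
      ≤ ∑ i ∈ Finset.range N, ellV v (x i) (x (i+1)) :=
    Finset.sum_le_sum fun i _ => keyL (x i) (x (i+1))
  have hdist : ∑ i ∈ Finset.range N, (1/2) * (ellV v₁ (x i) (x (i+1)) + ellV v₂ (x i) (x (i+1)))
      = (1/2) * (∑ i ∈ Finset.range N, ellV v₁ (x i) (x (i+1))
        + ∑ i ∈ Finset.range N, ellV v₂ (x i) (x (i+1))) := by
    rw [← Finset.sum_add_distrib, Finset.mul_sum]
  rw [hdist] at hsum
  linarith
end

section
/- For every (t₁,t₂) ∈ ℝ² and every unit vector τ ∈ ℝ^d, the support function of 𝒞 = { (s₁,s₂) : (1/2)s₁² + s₂ ≤ 1 } and the support function of C = { (z,M) ∈ ℝ^d × Sym(d,ℝ) : (1/2)(z⊗z) + M ≤ Id } satisfy χ_𝒞*(t₁,t₂) = χ_C*(t₁·τ, t₂·(τ ⊗ τ)). -/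
open Matrix

lemma vecMulVec_mulVec' {d : ℕ} (a b x : Fin d → ℝ) :
    (Matrix.vecMulVec a b) *ᵥ x = (b ⬝ᵥ x) • a := by
  ext i
  simp [Matrix.mulVec, Matrix.vecMulVec_apply, dotProduct, Finset.mul_sum, Finset.sum_mul,
    mul_comm, mul_assoc, mul_left_comm]

lemma trace_vecMulVec_mul' {d : ℕ} (a b : Fin d → ℝ) (M : Matrix (Fin d) (Fin d) ℝ) :
    (Matrix.vecMulVec a b * M).trace = b ⬝ᵥ (M *ᵥ a) := by
  rw [Matrix.trace]
  simp only [Matrix.diag, Matrix.mul_apply, Matrix.vecMulVec_apply, dotProduct, Matrix.mulVec]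
  rw [Finset.sum_comm]
  refine Finset.sum_congr rfl fun j _ => ?_
  rw [Finset.mul_sum]
  refine Finset.sum_congr rfl fun i _ => ?_
  ring

lemma vecMulVec_isHermitian' {d : ℕ} (a : Fin d → ℝ) :
    (Matrix.vecMulVec a a).IsHermitian := by
  ext i j
  simp [Matrix.conjTranspose_apply, Matrix.vecMulVec_apply, mul_comm]

lemma isHermitian_smul' {d : ℕ} (c : ℝ) {A : Matrix (Fin d) (Fin d) ℝ}
    (h : A.IsHermitian) : (c • A).IsHermitian := by
  unfold Matrix.IsHermitian at *
  rw [Matrix.conjTranspose_smul, star_trivial, h]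

lemma quad_form {d : ℕ} (z : Fin d → ℝ) (M : Matrix (Fin d) (Fin d) ℝ) (x : Fin d → ℝ) :
    x ⬝ᵥ (((1 : Matrix (Fin d) (Fin d) ℝ) - ((1/2 : ℝ) • Matrix.vecMulVec z z + M)) *ᵥ x)
      = x ⬝ᵥ x - (1/2) * (z ⬝ᵥ x)^2 - x ⬝ᵥ (M *ᵥ x) := by
  simp only [Matrix.sub_mulVec, Matrix.add_mulVec, Matrix.one_mulVec,
    Matrix.smul_mulVec, vecMulVec_mulVec', dotProduct_sub, dotProduct_add,
    dotProduct_smul, smul_eq_mul]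
  rw [dotProduct_comm x z]
  ring

theorem stmt19 {d : ℕ} (t₁ t₂ : ℝ) (τ : Fin d → ℝ) (hτ : τ ⬝ᵥ τ = 1) :
    (⨆ s ∈ {p : ℝ × ℝ | (1/2) * p.1^2 + p.2 ≤ 1}, ((s.1 * t₁ + s.2 * t₂ : ℝ) : EReal))
    = ⨆ p ∈ {q : (Fin d → ℝ) × Matrix (Fin d) (Fin d) ℝ | q.2.IsSymm ∧
        ((1 : Matrix (Fin d) (Fin d) ℝ) -
          ((1/2 : ℝ) • Matrix.vecMulVec q.1 q.1 + q.2)).PosSemidef},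
      ((((t₁ • τ) ⬝ᵥ p.1) + ((t₂ • Matrix.vecMulVec τ τ) * p.2).trace : ℝ) : EReal) := by
  have hcs : ∀ x : Fin d → ℝ, (τ ⬝ᵥ x)^2 ≤ x ⬝ᵥ x := by
    intro x
    calc (τ ⬝ᵥ x)^2 ≤ (τ ⬝ᵥ τ) * (x ⬝ᵥ x) := by
          simpa [dotProduct, pow_two, mul_assoc, mul_comm, mul_left_comm] using
            Finset.sum_mul_sq_le_sq_mul_sq Finset.univ τ x
      _ = x ⬝ᵥ x := by rw [hτ, one_mul]
  apply le_antisymm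
  · refine iSup₂_le fun s hs => ?_
    refine le_iSup₂_of_le (s.1 • τ, s.2 • Matrix.vecMulVec τ τ) ?_ ?_
    · refine ⟨?_, Matrix.PosSemidef.of_dotProduct_mulVec_nonneg ?_ ?_⟩
      · unfold Matrix.IsSymm
        ext i j
        simp [Matrix.vecMulVec_apply, mul_comm]
      · exact Matrix.isHermitian_one.sub
          ((isHermitian_smul' _ (vecMulVec_isHermitian' (s.1 • τ))).add
            (isHermitian_smul' _ (vecMulVec_isHermitian' τ)))
      · intro x
        have key := quad_form (s.1 • τ) (s.2 • Matrix.vecMulVec τ τ) x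
        simp only [star_trivial]
        rw [key, smul_dotProduct, smul_eq_mul, Matrix.smul_mulVec,
          vecMulVec_mulVec', dotProduct_smul, dotProduct_smul, smul_eq_mul, smul_eq_mul,
          dotProduct_comm x τ]
        have h1 := hcs x
        have h2 : ((1/2) * s.1^2 + s.2) * (τ ⬝ᵥ x)^2 ≤ 1 * (τ ⬝ᵥ x)^2 :=
          mul_le_mul_of_nonneg_right hs (sq_nonneg _)
        nlinarith [sq_nonneg (τ ⬝ᵥ x)]
    · apply EReal.coe_le_coe_iff.mpr
      have h1 : (t₁ • τ) ⬝ᵥ (s.1 • τ) = s.1 * t₁ := by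
        rw [smul_dotProduct, dotProduct_smul, hτ]; simp; ring
      have h2 : ((t₂ • Matrix.vecMulVec τ τ) * (s.2 • Matrix.vecMulVec τ τ)).trace = s.2 * t₂ := by
        rw [smul_mul_assoc, mul_smul_comm, Matrix.trace_smul, Matrix.trace_smul,
          trace_vecMulVec_mul', vecMulVec_mulVec', dotProduct_smul, hτ]
        simp; ring
      rw [h1, h2]
  · refine iSup₂_le fun p hp => ?_
    obtain ⟨hsym, hpsd⟩ := hp
    refine le_iSup₂_of_le (τ ⬝ᵥ p.1, τ ⬝ᵥ (p.2 *ᵥ τ)) ?_ ?_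
    · have h := hpsd.dotProduct_mulVec_nonneg τ
      simp only [star_trivial] at h
      rw [quad_form] at h
      rw [dotProduct_comm p.1 τ, hτ] at h
      simp only [Set.mem_setOf_eq]
      nlinarith [h]
    · apply EReal.coe_le_coe_iff.mpr
      have h1 : (t₁ • τ) ⬝ᵥ p.1 = (τ ⬝ᵥ p.1) * t₁ := by
        rw [smul_dotProduct]; simp; ring
      have h2 : ((t₂ • Matrix.vecMulVec τ τ) * p.2).trace = (τ ⬝ᵥ (p.2 *ᵥ τ)) * t₂ := by
        rw [smul_mul_assoc, Matrix.trace_smul, trace_vecMulVec_mul']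
        simp; ring
      rw [h1, h2]
end
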